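/- arXiv:2101.04415 — 9 statements merged into one kernel-verified Lean document; each statement's English description precedes it below -/
import Mathlib

section
/- Let Γ be a finite simplicial graph containing no clique on r+1 vertices. Then every connected full (induced) subgraph of the opposite graph Γ° has diameter at most 2r−1. -/
open SimpleGraph

lemma my_length_drop {V : Type*} {G : SimpleGraph V} {u v : V}
    (p : G.Walk u v) (n : ℕ) : (p.drop n).length = p.length - n := by
  induction p generalizing n with
  | nil => cases n <;> simp [Walk.drop]
  | cons h q ih =>
    cases n with
    | zero => simp [Walk.drop]
    | succ n => simpa [Walk.drop] using ih n

/-- distance from the `j`-th vertex of a walk to its end. -/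
lemma my_dist_getVert_right {V : Type*} {G : SimpleGraph V} {u v : V}
    (p : G.Walk u v) (j : ℕ) : G.dist (p.getVert j) v ≤ p.length - j := by
  have := SimpleGraph.dist_le (p.drop j)
  rwa [my_length_drop] at this

/-- distance from the start of a walk to its `i`-th vertex. -/
lemma my_dist_getVert_left {V : Type*} {G : SimpleGraph V} {u v : V}
    (p : G.Walk u v) (i : ℕ) (hi : i ≤ p.length) : G.dist u (p.getVert i) ≤ i := by
  have h1 := my_dist_getVert_right p.reverse (p.length - i)
  rw [Walk.getVert_reverse, Walk.length_reverse] at h1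
  have h2 : p.length - (p.length - i) = i := by omega
  rw [h2] at h1
  rw [SimpleGraph.dist_comm]
  exact h1.trans (by omega)

/-- If a finite simplicial graph `Γ` contains no clique on `r+1`
vertices, then every connected full (induced) subgraph of the opposite graph
`Γᶜ` has diameter at most `2r - 1`. -/
theorem stmt0 {V : Type*} [Fintype V] (Γ : SimpleGraph V) (r : ℕ)
    (hcl : Γ.CliqueFree (r + 1)) (Λ : Set V)
    (hconn : (Γᶜ.induce Λ).Connected) :
    ∀ x y : Λ, (Γᶜ.induce Λ).dist x y ≤ 2 * r - 1 := by
  intro x y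
  classical
  set G := Γᶜ.induce Λ with hG
  rcases Nat.eq_zero_or_pos r with hr | hr
  · subst hr
    exact absurd (show Γ.IsNClique 1 {(x : V)} by simp) (hcl _)
  by_contra hd
  push_neg at hd
  have hd2 : 2 * r ≤ G.dist x y := by omega
  obtain ⟨p, hp⟩ := (hconn x y).exists_walk_length_eq_dist
  -- key shortcut lemma
  have key : ∀ i j : ℕ, i + 1 < j → j ≤ p.length →
      Γ.Adj (p.getVert i : V) (p.getVert j : V) := by
    intro i j hij hj
    have h1 := my_dist_getVert_left p i (by omega)
    have h2 := my_dist_getVert_right p j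
    have hne : p.getVert i ≠ p.getVert j := by
      intro he
      have h4 := (hconn.dist_triangle (v := p.getVert j)).trans
        (Nat.add_le_add (he ▸ h1) h2)
      omega
    by_contra hnadj
    have hc : (Γᶜ).Adj (p.getVert i : V) (p.getVert j : V) :=
      ⟨Subtype.coe_injective.ne hne, hnadj⟩
    have hGadj : G.Adj (p.getVert i) (p.getVert j) := hc
    have h3 : G.dist (p.getVert i) (p.getVert j) ≤ 1 := SimpleGraph.dist_le hGadj.toWalk
    have h4 := (hconn.dist_triangle (v := p.getVert i)).trans
      (Nat.add_le_add h1 ((hconn.dist_triangle (v := p.getVert j)).trans (Nat.add_le_add h3 h2)))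
    omega
  -- build the clique
  have hcl' := hcl (Finset.image (fun k : Fin (r + 1) => (p.getVert (2 * k) : V)) Finset.univ)
  apply hcl'
  constructor
  · intro a ha b hb hab
    simp only [Finset.coe_image, Set.mem_image, Finset.mem_coe, Finset.mem_univ] at ha hb
    obtain ⟨k, -, hk⟩ := ha
    obtain ⟨l, -, hl⟩ := hb
    subst hk hl
    rcases lt_trichotomy (k : ℕ) (l : ℕ) with h | h | h
    · exact key (2 * k) (2 * l) (by omega)
        (by rw [hp]; have := l.2; omega)
    · exact absurd (by rw [h]) hab
    · exact (key (2 * l) (2 * k) (by omega)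
        (by rw [hp]; have := k.2; omega)).symm
  · rw [Finset.card_image_of_injective _ ?_, Finset.card_univ, Fintype.card_fin]
    intro k l hkl
    by_contra hne
    have hne' : (k : ℕ) ≠ (l : ℕ) := fun h => hne (Fin.ext h)
    rcases lt_or_gt_of_ne hne' with h | h
    · exact ((key (2 * k) (2 * l) (by omega) (by rw [hp]; have := l.2; omega)).ne) hkl
    · exact ((key (2 * l) (2 * k) (by omega) (by rw [hp]; have := k.2; omega)).ne) hkl.symm
end

section
/- Let Γ be a finite connected simplicial graph containing two vertices at graph distance at least 3. Then Γ admits a good partition of its vertex set. -/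
/-- A *good partition* of the vertex set of a simplicial graph `Γ` into three
nonempty parts `Lp ⊔ L ⊔ Lm` (Definition of the paper): (i) every vertex of
`Lp` is at graph distance at least 2 from every vertex of `Lm`; (ii) for each
sign and each `w` in that part, no vertex `v` of the other two parts has
`lk v ⊆ lk w ∪ (same part as w)`; (iii) for each `w` in `Lp` (resp. `Lm`),
the full subgraph spanned by `(L ∪ Lm) \ St w` (resp. `(L ∪ Lp) \ St w`)
is connected. -/
def GoodPartition {V : Type*} (Γ : SimpleGraph V) (Lp L Lm : Set V) : Prop :=
  Lp.Nonempty ∧ L.Nonempty ∧ Lm.Nonempty ∧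
  Disjoint Lp L ∧ Disjoint Lp Lm ∧ Disjoint L Lm ∧
  Lp ∪ L ∪ Lm = Set.univ ∧
  (∀ w ∈ Lp, ∀ v ∈ Lm, 2 ≤ Γ.dist w v) ∧
  (∀ w ∈ Lp, ¬ ∃ v ∈ L ∪ Lm, Γ.neighborSet v ⊆ Γ.neighborSet w ∪ Lp) ∧
  (∀ w ∈ Lm, ¬ ∃ v ∈ L ∪ Lp, Γ.neighborSet v ⊆ Γ.neighborSet w ∪ Lm) ∧
  (∀ w ∈ Lp, (Γ.induce ((L ∪ Lm) \ (Γ.neighborSet w ∪ {w}))).Connected) ∧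
  (∀ w ∈ Lm, (Γ.induce ((L ∪ Lp) \ (Γ.neighborSet w ∪ {w}))).Connected)

section GPAux

variable {V : Type*} (Γ : SimpleGraph V) (x y₀ : V) (E : ℕ)

/-- The closed neighbourhood of the sphere of radius `E` around `x`. -/
def gpNL : Set V := {v | Γ.dist x v = E ∨ ∃ u, Γ.dist x u = E ∧ Γ.Adj v u}

/-- One step of adjacency inside `gpNL`. -/
def gpStep : V → V → Prop :=
  fun a b => a ∈ gpNL Γ x E ∧ b ∈ gpNL Γ x E ∧ Γ.Adj a b

/-- The connected component of `y₀` inside `gpNL`. -/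
def gpC : Set V := {v | Relation.ReflTransGen (gpStep Γ x E) v y₀}

/-- The part of the far sphere in the component of `y₀`. -/
def gpY : Set V := {v | v ∈ gpC Γ x y₀ E ∧ Γ.dist x v = E}

/-- Distance to the set `gpY`. -/
noncomputable def gpG (v : V) : ℕ :=
  sInf {n | ∃ u ∈ gpY Γ x y₀ E, Γ.dist v u = n}

variable {Γ x y₀ E}

lemma gp_y0_mem (h : Γ.dist x y₀ = E) : y₀ ∈ gpY Γ x y₀ E :=
  ⟨Relation.ReflTransGen.refl, h⟩

lemma gp_g_le {u : V} (hu : u ∈ gpY Γ x y₀ E) (v : V) :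
    gpG Γ x y₀ E v ≤ Γ.dist v u :=
  Nat.sInf_le ⟨u, hu, rfl⟩

lemma gp_g_spec (h : Γ.dist x y₀ = E) (v : V) :
    ∃ u ∈ gpY Γ x y₀ E, Γ.dist v u = gpG Γ x y₀ E v :=
  Nat.sInf_mem (⟨Γ.dist v y₀, y₀, gp_y0_mem h, rfl⟩ :
    {n | ∃ u ∈ gpY Γ x y₀ E, Γ.dist v u = n}.Nonempty)

lemma gp_g_zero_iff (hconn : Γ.Connected) (h : Γ.dist x y₀ = E) (v : V) :
    gpG Γ x y₀ E v = 0 ↔ v ∈ gpY Γ x y₀ E := by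
  constructor
  · intro h0
    obtain ⟨u, hu, hdu⟩ := gp_g_spec h v
    rw [h0] at hdu
    have : v = u := (hconn.dist_eq_zero_iff).mp hdu
    rwa [this]
  · intro hv
    have := gp_g_le hv v
    simpa [SimpleGraph.dist_self] using this

lemma gp_C_sub_NL (h : Γ.dist x y₀ = E) {v : V} (hv : v ∈ gpC Γ x y₀ E) :
    v ∈ gpNL Γ x E := by
  rcases Relation.ReflTransGen.cases_head hv with rfl | ⟨c, hstep, _⟩
  · exact Or.inl h
  · exact hstep.1

lemma gp_C_step {q m : V} (hq : q ∈ gpNL Γ x E) (hm : m ∈ gpNL Γ x E)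
    (hadj : Γ.Adj q m) (hmC : m ∈ gpC Γ x y₀ E) : q ∈ gpC Γ x y₀ E :=
  Relation.ReflTransGen.head ⟨hq, hm, hadj⟩ hmC

lemma gp_C_nbhd (h : Γ.dist x y₀ = E) {v : V} (hv : v ∈ gpC Γ x y₀ E) :
    v ∈ gpY Γ x y₀ E ∨ ∃ u ∈ gpY Γ x y₀ E, Γ.Adj v u := by
  rcases gp_C_sub_NL h hv with hE | ⟨u, huE, hadj⟩
  · exact Or.inl ⟨hv, hE⟩
  · have huNL : u ∈ gpNL Γ x E := Or.inl huE
    have hvNL : v ∈ gpNL Γ x E := gp_C_sub_NL h hv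
    have huC : u ∈ gpC Γ x y₀ E := by
      -- u is adjacent to v ∈ C and both are in NL, and v ∈ C means v reaches y₀;
      -- we go u → v → y₀.
      exact Relation.ReflTransGen.head ⟨huNL, hvNL, hadj.symm⟩ hv
    exact Or.inr ⟨u, ⟨huC, huE⟩, hadj⟩

lemma gp_C_g_le_one (hconn : Γ.Connected) (h : Γ.dist x y₀ = E) {v : V}
    (hv : v ∈ gpC Γ x y₀ E) : gpG Γ x y₀ E v ≤ 1 := by
  rcases gp_C_nbhd h hv with hY | ⟨u, huY, hadj⟩
  · have := (gp_g_zero_iff hconn h v).mpr hY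
    omega
  · have h1 : Γ.dist v u = 1 := SimpleGraph.dist_eq_one_iff_adj.mpr hadj
    have := gp_g_le huY v
    omega

/-- Transfer reachability inside the component `gpC` to reachability in an
induced subgraph on any superset `T` of `gpC`. -/
lemma gp_transfer (T : Set V) (hsub : gpC Γ x y₀ E ⊆ T) (hy₀T : y₀ ∈ T) :
    ∀ {a : V}, a ∈ gpC Γ x y₀ E → ∀ (haT : a ∈ T),
      (Γ.induce T).Reachable ⟨a, haT⟩ ⟨y₀, hy₀T⟩ := by
  intro a ha
  induction ha using Relation.ReflTransGen.head_induction_on with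
  | refl => intro h; exact SimpleGraph.Reachable.refl _
  | head hstep htail ih =>
    intro haT
    rename_i a' c
    have hcC : c ∈ gpC Γ x y₀ E := htail
    have hcT : c ∈ T := hsub hcC
    have hadj : (Γ.induce T).Adj ⟨a', haT⟩ ⟨c, hcT⟩ := hstep.2.2
    exact hadj.reachable.trans (ih hcT)

/-- descent towards a fixed vertex along geodesics. -/
lemma gp_descent (hconn : Γ.Connected) {u v : V} (h : 1 ≤ Γ.dist u v) :
    ∃ m, Γ.Adj v m ∧ Γ.dist u m + 1 = Γ.dist u v := by
  obtain ⟨p, hp⟩ := hconn.exists_walk_length_eq_dist v u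
  cases p with
  | nil =>
    exfalso
    rw [SimpleGraph.dist_self] at h
    omega
  | @cons _ m _ hadj q =>
    refine ⟨m, hadj, ?_⟩
    rw [SimpleGraph.Walk.length_cons] at hp
    have h1 : Γ.dist m u ≤ q.length := SimpleGraph.dist_le q
    have h1' : Γ.dist u m = Γ.dist m u := SimpleGraph.dist_comm
    have h3 : Γ.dist u v ≤ Γ.dist u m + Γ.dist m v := hconn.dist_triangle
    have h4 : Γ.dist m v = 1 := SimpleGraph.dist_eq_one_iff_adj.mpr hadj.symm
    have h5 : Γ.dist v u = Γ.dist u v := SimpleGraph.dist_comm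
    omega

/-- descent towards the set `gpY`. -/
lemma gp_g_descent (hconn : Γ.Connected) (h : Γ.dist x y₀ = E) {v : V}
    (h1 : 1 ≤ gpG Γ x y₀ E v) :
    ∃ m, Γ.Adj v m ∧ gpG Γ x y₀ E m + 1 = gpG Γ x y₀ E v := by
  obtain ⟨u, huY, hdu⟩ := gp_g_spec h v
  have hd1 : 1 ≤ Γ.dist u v := by
    have hc : Γ.dist u v = Γ.dist v u := SimpleGraph.dist_comm
    omega
  obtain ⟨m, hadj, hm⟩ := gp_descent hconn hd1
  refine ⟨m, hadj, ?_⟩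
  -- dist u m + 1 = dist u v
  have hle : gpG Γ x y₀ E m ≤ Γ.dist m u := gp_g_le huY m
  have hmu : Γ.dist m u = Γ.dist u m := SimpleGraph.dist_comm
  have huv : Γ.dist u v = Γ.dist v u := SimpleGraph.dist_comm
  -- lower bound : g v ≤ g m + 1
  obtain ⟨u', hu'Y, hdu'⟩ := gp_g_spec h m
  have hvle : gpG Γ x y₀ E v ≤ Γ.dist v u' := gp_g_le hu'Y v
  have htri : Γ.dist v u' ≤ Γ.dist v m + Γ.dist m u' := hconn.dist_triangle
  have hvm : Γ.dist v m = 1 := SimpleGraph.dist_eq_one_iff_adj.mpr hadj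
  omega

end GPAux

/-- a finite connected simplicial graph containing two vertices at
graph distance at least 3 admits a good partition of its vertex set. -/
theorem stmt1 {V : Type*} [Fintype V] (Γ : SimpleGraph V) (hconn : Γ.Connected)
    (x y : V) (hxy : 3 ≤ Γ.dist x y) :
    ∃ Lp L Lm : Set V, GoodPartition Γ Lp L Lm := by
  classical
  have hne : Nonempty V := ⟨x⟩
  obtain ⟨y₀, hy₀max⟩ := Finite.exists_max (fun v => Γ.dist x v)
  set E : ℕ := Γ.dist x y₀ with hEdef
  have hy₀E : Γ.dist x y₀ = E := rfl
  have hE : ∀ v, Γ.dist x v ≤ E := hy₀max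
  have hE3 : 3 ≤ E := le_trans hxy (hE y)
  set Y : Set V := gpY Γ x y₀ E with hYdef
  set g : V → ℕ := gpG Γ x y₀ E with hgdef
  set Lp : Set V := {v | 3 ≤ g v} with hLpdef
  set Lmid : Set V := {v | 1 ≤ g v ∧ g v ≤ 2} with hLmiddef
  -- basic facts
  have hy₀Y : y₀ ∈ Y := gp_y0_mem hy₀E
  have g_le : ∀ {u : V}, u ∈ Y → ∀ v, g v ≤ Γ.dist v u := fun hu v => gp_g_le hu v
  have g_spec : ∀ v, ∃ u ∈ Y, Γ.dist v u = g v := fun v => gp_g_spec hy₀E v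
  have g_desc : ∀ {v : V}, 1 ≤ g v → ∃ m, Γ.Adj v m ∧ g m + 1 = g v :=
    fun h => gp_g_descent hconn hy₀E h
  have g_C1 : ∀ {c : V}, c ∈ gpC Γ x y₀ E → g c ≤ 1 :=
    fun hc => gp_C_g_le_one hconn hy₀E hc
  have hg0 : ∀ v, g v = 0 ↔ v ∈ Y := fun v => gp_g_zero_iff hconn hy₀E v
  have hgY : ∀ v ∈ Y, g v = 0 := fun v hv => (hg0 v).mpr hv
  have hgpos : ∀ v, v ∉ Y → 1 ≤ g v := by
    intro v hv
    rcases Nat.eq_zero_or_pos (g v) with h0 | h0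
    · exact absurd ((hg0 v).mp h0) hv
    · omega
  have hdistY : ∀ v ∈ Y, Γ.dist x v = E := fun v hv => hv.2
  have hgx : g x = E := by
    obtain ⟨u, huY, hdu⟩ := g_spec x
    have h1 : g x ≤ Γ.dist x y₀ := g_le hy₀Y x
    have h2 : Γ.dist x u = E := hdistY u huY
    omega
  have hgadj : ∀ a b, Γ.Adj a b → g a ≤ g b + 1 := by
    intro a b hadj
    obtain ⟨u, huY, hdu⟩ := g_spec b
    have h1 : g a ≤ Γ.dist a u := g_le huY a
    have h2 : Γ.dist a u ≤ Γ.dist a b + Γ.dist b u := hconn.dist_triangle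
    have h3 : Γ.dist a b = 1 := SimpleGraph.dist_eq_one_iff_adj.mpr hadj
    omega
  -- the key contradiction engine: a vertex of the far sphere adjacent (through m)
  -- to the component of y₀ is itself in Y
  have key : ∀ a m w, Γ.Adj a m → Γ.Adj w m → w ∈ Y → Γ.dist x a = E → a ∈ Y := by
    intro a m w ham hwm hwY hxa
    have hwE : Γ.dist x w = E := hdistY w hwY
    have hwNL : w ∈ gpNL Γ x E := Or.inl hwE
    have hmNL : m ∈ gpNL Γ x E := Or.inr ⟨w, hwE, hwm.symm⟩
    have hmC : m ∈ gpC Γ x y₀ E := gp_C_step hmNL hwNL hwm.symm hwY.1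
    have haNL : a ∈ gpNL Γ x E := Or.inl hxa
    have haC : a ∈ gpC Γ x y₀ E := gp_C_step haNL hmNL ham hmC
    exact ⟨haC, hxa⟩
  -- nonemptiness
  have hxLp : x ∈ Lp := by simp only [hLpdef, Set.mem_setOf_eq]; omega
  have hmidne : Lmid.Nonempty := by
    have h1 : 1 ≤ Γ.dist x y₀ := by omega
    obtain ⟨m, hadj, hm⟩ := gp_descent hconn h1
    have hdm : Γ.dist m y₀ = 1 := SimpleGraph.dist_eq_one_iff_adj.mpr hadj.symm
    have hgm1 : g m ≤ 1 := by
      have h2 := g_le hy₀Y m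
      omega
    have hmY : m ∉ Y := by
      intro hc
      have := hdistY m hc
      omega
    have := hgpos m hmY
    exact ⟨m, by simp only [hLmiddef, Set.mem_setOf_eq]; omega⟩
  -- disjointness
  have hdisj1 : Disjoint Lp Lmid := by
    rw [Set.disjoint_left]
    intro v h1 h2
    simp only [hLpdef, hLmiddef, Set.mem_setOf_eq] at h1 h2
    omega
  have hdisj2 : Disjoint Lp Y := by
    rw [Set.disjoint_left]
    intro v h1 h2
    have := hgY v h2
    simp only [hLpdef, Set.mem_setOf_eq] at h1
    omega
  have hdisj3 : Disjoint Lmid Y := by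
    rw [Set.disjoint_left]
    intro v h1 h2
    have := hgY v h2
    simp only [hLmiddef, Set.mem_setOf_eq] at h1
    omega
  -- union
  have hunion : Lp ∪ Lmid ∪ Y = Set.univ := by
    ext v
    simp only [Set.mem_union, Set.mem_univ, iff_true, hLpdef, hLmiddef, Set.mem_setOf_eq]
    by_cases hY : v ∈ Y
    · exact Or.inr hY
    · have := hgpos v hY
      left
      omega
  -- condition (i)
  have hcondi : ∀ w ∈ Lp, ∀ v ∈ Y, 2 ≤ Γ.dist w v := by
    intro w hw v hv
    have h1 : g w ≤ Γ.dist w v := g_le hv w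
    simp only [hLpdef, Set.mem_setOf_eq] at hw
    omega
  -- condition (ii) for Lp
  have hcondiip : ∀ w ∈ Lp, ¬ ∃ v ∈ Lmid ∪ Y, Γ.neighborSet v ⊆ Γ.neighborSet w ∪ Lp := by
    intro w hw ⟨v, hv, hsub⟩
    simp only [hLpdef, Set.mem_setOf_eq] at hw
    have hgv2 : g v ≤ 2 := by
      rcases hv with h | h
      · simp only [hLmiddef, Set.mem_setOf_eq] at h; omega
      · have := hgY v h; omega
    -- get a neighbour m of v with g m ≤ 1
    obtain ⟨m, hadj, hgm⟩ : ∃ m, Γ.Adj v m ∧ g m ≤ 1 := by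
      by_cases h1 : 1 ≤ g v
      · obtain ⟨m, hadj, hm⟩ := g_desc h1
        exact ⟨m, hadj, by omega⟩
      · have hvY : v ∈ Y := (hg0 v).mp (by omega)
        have hd : 1 ≤ Γ.dist x v := by have := hdistY v hvY; omega
        obtain ⟨m, hadj, _⟩ := gp_descent hconn hd
        have h2 : g m ≤ g v + 1 := hgadj m v hadj.symm
        exact ⟨m, hadj, by omega⟩
    have hmem : m ∈ Γ.neighborSet w ∪ Lp := hsub hadj
    rcases hmem with h | h
    · have : Γ.Adj w m := h
      have := hgadj w m this
      omega
    · simp only [hLpdef, Set.mem_setOf_eq] at h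
      omega
  -- condition (ii) for Y
  have hcondiim : ∀ w ∈ Y, ¬ ∃ v ∈ Lmid ∪ Lp, Γ.neighborSet v ⊆ Γ.neighborSet w ∪ Y := by
    intro w hwY ⟨v, hv, hsub⟩
    have hgv : 1 ≤ g v := by
      rcases hv with h | h
      · simp only [hLmiddef, Set.mem_setOf_eq] at h; omega
      · simp only [hLpdef, Set.mem_setOf_eq] at h; omega
    have hxw : Γ.dist x w = E := hdistY w hwY
    by_cases hxv : 1 ≤ Γ.dist x v
    · obtain ⟨m, hadj, hm⟩ := gp_descent hconn hxv
      have hmem : m ∈ Γ.neighborSet w ∪ Y := hsub hadj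
      rcases hmem with h | h
      · have hwm : Γ.Adj w m := h
        have h3 : Γ.dist m w = 1 := SimpleGraph.dist_eq_one_iff_adj.mpr hwm.symm
        have h2 : Γ.dist x w ≤ Γ.dist x m + Γ.dist m w := hconn.dist_triangle
        have h4 : Γ.dist x v ≤ E := hE v
        have hxvE : Γ.dist x v = E := by omega
        have hvY : v ∈ Y := key v m w hadj hwm hwY hxvE
        have := hgY v hvY
        omega
      · have := hdistY m h
        have := hE v
        omega
    · have hxv0 : Γ.dist x v = 0 := by omega
      have hxveq : x = v := (hconn.dist_eq_zero_iff).mp hxv0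
      subst hxveq
      have hd : 1 ≤ Γ.dist w x := by
        have : Γ.dist w x = Γ.dist x w := SimpleGraph.dist_comm
        omega
      obtain ⟨m, hadj, hm⟩ := gp_descent hconn hd
      have hmem : m ∈ Γ.neighborSet w ∪ Y := hsub hadj
      have hdwx : Γ.dist w x = E := by
        have : Γ.dist w x = Γ.dist x w := SimpleGraph.dist_comm
        omega
      rcases hmem with h | h
      · have hwm : Γ.Adj w m := h
        have : Γ.dist w m = 1 := SimpleGraph.dist_eq_one_iff_adj.mpr hwm
        omega
      · have h1 : Γ.dist x m = E := hdistY m h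
        have h2 : Γ.dist x m = 1 := SimpleGraph.dist_eq_one_iff_adj.mpr hadj
        omega
  -- condition (iii) for Lp
  have hcondiiip : ∀ w ∈ Lp,
      (Γ.induce ((Lmid ∪ Y) \ (Γ.neighborSet w ∪ {w}))).Connected := by
    intro w hw
    simp only [hLpdef, Set.mem_setOf_eq] at hw
    set T : Set V := (Lmid ∪ Y) \ (Γ.neighborSet w ∪ {w}) with hTdef
    have hTmem : ∀ v, v ∈ T ↔ ((v ∈ Lmid ∨ v ∈ Y) ∧ ¬ Γ.Adj w v ∧ v ≠ w) := by
      intro v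
      simp only [hTdef, Set.mem_diff, Set.mem_union, Set.mem_singleton_iff,
        SimpleGraph.mem_neighborSet, not_or]
    have hCT : gpC Γ x y₀ E ⊆ T := by
      intro c hc
      have hgc : g c ≤ 1 := g_C1 hc
      rw [hTmem]
      refine ⟨?_, ?_, ?_⟩
      · rcases Nat.eq_zero_or_pos (g c) with h0 | h0
        · exact Or.inr ((hg0 c).mp h0)
        · exact Or.inl (by simp only [hLmiddef, Set.mem_setOf_eq]; omega)
      · intro hadj
        have := hgadj w c hadj
        omega
      · intro hc'
        subst hc'
        omega
    have hy₀T : y₀ ∈ T := hCT hy₀Y.1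
    have claim : ∀ n (a : V) (haT : a ∈ T), g a ≤ n →
        (Γ.induce T).Reachable ⟨a, haT⟩ ⟨y₀, hy₀T⟩ := by
      intro n
      induction n with
      | zero =>
        intro a haT h0
        have haY : a ∈ Y := (hg0 a).mp (by omega)
        exact gp_transfer T hCT hy₀T haY.1 haT
      | succ k ih =>
        intro a haT hle
        by_cases hk : g a ≤ k
        · exact ih a haT hk
        · have hga : 1 ≤ g a := by omega
          have hga2 : g a ≤ 2 := by
            rcases (hTmem a).mp haT with ⟨h | h, -, -⟩
            · simp only [hLmiddef, Set.mem_setOf_eq] at h; omega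
            · have := hgY a h; omega
          obtain ⟨m, hadj, hm⟩ := g_desc hga
          have hmT : m ∈ T := by
            rw [hTmem]
            refine ⟨?_, ?_, ?_⟩
            · rcases Nat.eq_zero_or_pos (g m) with h0 | h0
              · exact Or.inr ((hg0 m).mp h0)
              · exact Or.inl (by simp only [hLmiddef, Set.mem_setOf_eq]; omega)
            · intro hadj'
              have := hgadj w m hadj'
              omega
            · intro hc'
              subst hc'
              omega
          have hadjT : (Γ.induce T).Adj ⟨a, haT⟩ ⟨m, hmT⟩ := hadj
          exact hadjT.reachable.trans (ih m hmT (by omega))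
    rw [SimpleGraph.connected_iff_exists_forall_reachable]
    refine ⟨⟨y₀, hy₀T⟩, ?_⟩
    rintro ⟨a, haT⟩
    exact (claim (g a) a haT le_rfl).symm
  -- condition (iii) for Y
  have hcondiiim : ∀ w ∈ Y,
      (Γ.induce ((Lmid ∪ Lp) \ (Γ.neighborSet w ∪ {w}))).Connected := by
    intro w hwY
    have hxw : Γ.dist x w = E := hdistY w hwY
    set T : Set V := (Lmid ∪ Lp) \ (Γ.neighborSet w ∪ {w}) with hTdef
    have hTmem : ∀ v, v ∈ T ↔ ((v ∈ Lmid ∨ v ∈ Lp) ∧ ¬ Γ.Adj w v ∧ v ≠ w) := by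
      intro v
      simp only [hTdef, Set.mem_diff, Set.mem_union, Set.mem_singleton_iff,
        SimpleGraph.mem_neighborSet, not_or]
    have hgT : ∀ v, v ∈ T → 1 ≤ g v := by
      intro v hv
      rcases (hTmem v).mp hv with ⟨h | h, -, -⟩
      · simp only [hLmiddef, Set.mem_setOf_eq] at h; omega
      · simp only [hLpdef, Set.mem_setOf_eq] at h; omega
    have hxT : x ∈ T := by
      rw [hTmem]
      refine ⟨Or.inr hxLp, ?_, ?_⟩
      · intro hadj
        have : Γ.dist w x = 1 := SimpleGraph.dist_eq_one_iff_adj.mpr hadj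
        have hcm : Γ.dist w x = Γ.dist x w := SimpleGraph.dist_comm
        omega
      · intro hc
        subst hc
        rw [SimpleGraph.dist_self] at hxw
        omega
    have claim : ∀ n (a : V) (haT : a ∈ T), Γ.dist x a ≤ n →
        (Γ.induce T).Reachable ⟨a, haT⟩ ⟨x, hxT⟩ := by
      intro n
      induction n with
      | zero =>
        intro a haT h0
        have : x = a := (hconn.dist_eq_zero_iff).mp (by omega)
        subst this
        exact SimpleGraph.Reachable.refl _
      | succ k ih =>
        intro a haT hle
        by_cases hk : Γ.dist x a ≤ k
        · exact ih a haT hk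
        · have hda : 1 ≤ Γ.dist x a := by omega
          obtain ⟨m, hadj, hm⟩ := gp_descent hconn hda
          have hmY : m ∉ Y := by
            intro hc
            have := hdistY m hc
            have := hE a
            omega
          have hgm : 1 ≤ g m := hgpos m hmY
          have hmnadj : ¬ Γ.Adj w m := by
            intro hwm
            have h3 : Γ.dist m w = 1 := SimpleGraph.dist_eq_one_iff_adj.mpr hwm.symm
            have h2 : Γ.dist x w ≤ Γ.dist x m + Γ.dist m w := hconn.dist_triangle
            have h4 : Γ.dist x a ≤ E := hE a
            have hxaE : Γ.dist x a = E := by omega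
            have haY : a ∈ Y := key a m w hadj hwm hwY hxaE
            have := hgY a haY
            have := hgT a haT
            omega
          have hmT : m ∈ T := by
            rw [hTmem]
            refine ⟨?_, hmnadj, ?_⟩
            · by_cases h2 : g m ≤ 2
              · exact Or.inl (by simp only [hLmiddef, Set.mem_setOf_eq]; omega)
              · exact Or.inr (by simp only [hLpdef, Set.mem_setOf_eq]; omega)
            · intro hc
              subst hc
              exact hmY hwY
          have hadjT : (Γ.induce T).Adj ⟨a, haT⟩ ⟨m, hmT⟩ := hadj
          exact hadjT.reachable.trans (ih m hmT (by omega))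
    rw [SimpleGraph.connected_iff_exists_forall_reachable]
    refine ⟨⟨x, hxT⟩, ?_⟩
    rintro ⟨a, haT⟩
    exact (claim (Γ.dist x a) a haT le_rfl).symm
  exact ⟨Lp, Lmid, Y, ⟨x, hxLp⟩, hmidne, ⟨y₀, hy₀Y⟩, hdisj1, hdisj2, hdisj3,
    hunion, hcondi, hcondiip, hcondiim, hcondiiip, hcondiiim⟩
end

section
/- Let (X,d) be a median space and A ⊆ X a subset such that 𝒥(A) ⊆ N_R(A) for some R ≥ 0. Then for every D ≥ 0 one has 𝒥(N_D(A)) ⊆ N_{2D+R}(A). Consequently, for every integer i ≥ 0, the iterate 𝒥^i(A) is contained in the closed (2^i − 1)R–neighbourhood of A. -/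
/-- `w` is a median point of `x, y, z`: it lies metrically between each pair. -/
def IsMedianPoint {X : Type*} [MetricSpace X] (x y z w : X) : Prop :=
  dist x y = dist x w + dist w y ∧ dist x z = dist x w + dist w z ∧
    dist y z = dist y w + dist w z

/-- A median-space structure on a metric space: every triple admits a unique
median point. -/
structure MedianSpaceStruct (X : Type*) [MetricSpace X] where
  m : X → X → X → X
  isMedian : ∀ x y z, IsMedianPoint x y z (m x y z)
  unique : ∀ x y z w, IsMedianPoint x y z w → w = m x y z

/-- The interval `I(x,y) = {z : m(x,y,z) = z}`. -/
def medInterval {X : Type*} [MetricSpace X] (M : MedianSpaceStruct X) (x y : X) : Set X :=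
  {z | M.m x y z = z}

/-- The operator `𝒥(A) = ⋃_{x,y ∈ A} I(x,y)`. -/
def Jop {X : Type*} [MetricSpace X] (M : MedianSpaceStruct X) (A : Set X) : Set X :=
  ⋃ x ∈ A, ⋃ y ∈ A, medInterval M x y

/-- The closed `R`-neighbourhood of a set. -/
def closedNbhd {X : Type*} [MetricSpace X] (A : Set X) (R : ℝ) : Set X :=
  {p | ∃ a ∈ A, dist p a ≤ R}

/-- if `𝒥(A) ⊆ N_R(A)` then `𝒥(N_D(A)) ⊆ N_{2D+R}(A)` for every
`D ≥ 0`, and consequently `𝒥^i(A) ⊆ N_{(2^i - 1)R}(A)` for all `i`. -/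
theorem stmt3 {X : Type*} [MetricSpace X] (M : MedianSpaceStruct X)
    (A : Set X) (R : ℝ) (hR : 0 ≤ R) (hJ : Jop M A ⊆ closedNbhd A R) :
    (∀ D : ℝ, 0 ≤ D → Jop M (closedNbhd A D) ⊆ closedNbhd A (2 * D + R)) ∧
    (∀ i : ℕ, (Jop M)^[i] A ⊆ closedNbhd A ((2 ^ i - 1) * R)) := by
  have main : ∀ D : ℝ, 0 ≤ D → Jop M (closedNbhd A D) ⊆ closedNbhd A (2 * D + R) := by
    intro D hD z hz
    simp only [Jop, Set.mem_iUnion] at hz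
    obtain ⟨x, hx, y, hy, hzI⟩ := hz
    obtain ⟨x', hx', hxx'⟩ := hx
    obtain ⟨y', hy', hyy'⟩ := hy
    set w := M.m x' y' z with hw
    obtain ⟨h1, h2, h3⟩ := M.isMedian x' y' z
    rw [← hw] at h1 h2 h3
    have hzxy : dist x y = dist x z + dist z y := by
      have h := (M.isMedian x y z).1
      rw [medInterval, Set.mem_setOf_eq] at hzI
      rw [hzI] at h
      exact h
    have hwI : w ∈ medInterval M x' y' := by
      have hm : IsMedianPoint x' y' w w := by
        refine ⟨h1, ?_, ?_⟩ <;> simp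
      exact (M.unique x' y' w w hm).symm
    have hwJ : w ∈ Jop M A := by
      simp only [Jop, Set.mem_iUnion]
      exact ⟨x', hx', y', hy', hwI⟩
    obtain ⟨a, ha, hwa⟩ := hJ hwJ
    refine ⟨a, ha, ?_⟩
    have t1 : dist x' z ≤ dist x' x + dist x z := dist_triangle _ _ _
    have t2 : dist y' z ≤ dist y' y + dist y z := dist_triangle _ _ _
    have t3 : dist x y ≤ dist x x' + (dist x' y' + dist y' y) :=
      (dist_triangle x x' y).trans (by linarith [dist_triangle x' y' y])
    have tz : dist z a ≤ dist z w + dist w a := dist_triangle _ _ _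
    have c1 : dist x' x = dist x x' := dist_comm _ _
    have c2 : dist y' y = dist y y' := dist_comm _ _
    have c3 : dist w y' = dist y' w := dist_comm _ _
    have c4 : dist w z = dist z w := dist_comm _ _
    have c5 : dist y z = dist z y := dist_comm _ _
    linarith
  refine ⟨main, ?_⟩
  intro i
  induction i with
  | zero =>
    intro z hz
    exact ⟨z, hz, by norm_num⟩
  | succ i ih =>
    have hD : (0:ℝ) ≤ (2 ^ i - 1) * R := by
      apply mul_nonneg _ hR
      have : (1:ℝ) ≤ 2 ^ i := one_le_pow₀ (by norm_num)
      linarith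
    have hmono : Jop M ((Jop M)^[i] A) ⊆ Jop M (closedNbhd A ((2 ^ i - 1) * R)) := by
      intro z hz
      simp only [Jop, Set.mem_iUnion] at hz ⊢
      obtain ⟨x, hx, y, hy, h⟩ := hz
      exact ⟨x, ih hx, y, ih hy, h⟩
    rw [Function.iterate_succ_apply']
    intro z hz
    obtain ⟨a, ha, hza⟩ := main _ hD (hmono hz)
    refine ⟨a, ha, hza.trans (le_of_eq ?_)⟩
    rw [pow_succ]
    ring
end

section
/- Let T₁ and T₂ be rank-1 median algebras. Then the product median algebra T₁ × T₂ contains no pentagonal configuration: there is no 5-tuple (x₁,…,x₅) in T₁ × T₂ such that for every i (indices modulo 5) the set of walls 𝒲(x_{i−1},x_i,x_{i+1} | x_{i+2},x_{i+3}) is nonempty. -/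
/-- A median algebra: a set with a ternary median operation satisfying the
standard axioms. -/
structure MedianAlgebra (X : Type*) where
  med : X → X → X → X
  absorb : ∀ a b, med a a b = a
  rot : ∀ a b c, med a b c = med b c a
  swap : ∀ a b c, med a b c = med b a c
  assoc : ∀ a x b c, med (med a x b) x c = med a x (med b x c)

/-- A subset `C` is convex for the median operation `med` if
`med(C × C × X) ⊆ C`. -/
def IsConvexSet {X : Type*} (med : X → X → X → X) (C : Set X) : Prop :=
  ∀ a ∈ C, ∀ b ∈ C, ∀ x : X, med a b x ∈ C

/-- A halfspace: a subset such that both it and its complement are nonempty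
and convex. -/
def IsHalfspace {X : Type*} (med : X → X → X → X) (h : Set X) : Prop :=
  h.Nonempty ∧ hᶜ.Nonempty ∧ IsConvexSet med h ∧ IsConvexSet med hᶜ

/-- Two halfspaces (equivalently, the walls they bound) are transverse if all
four pairwise intersections of associated halfspaces are nonempty. -/
def Transverse {X : Type*} (h k : Set X) : Prop :=
  (h ∩ k).Nonempty ∧ (h ∩ kᶜ).Nonempty ∧ (hᶜ ∩ k).Nonempty ∧ (hᶜ ∩ kᶜ).Nonempty

/-- The median algebra has rank at most `r`: any collection of pairwise
transverse (distinct) halfspaces has cardinality at most `r`. -/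
def RankLE {X : Type*} (med : X → X → X → X) (r : ℕ) : Prop :=
  ∀ H : Finset (Set X), (∀ h ∈ H, IsHalfspace med h) →
    (∀ h ∈ H, ∀ k ∈ H, h ≠ k → Transverse h k) → H.card ≤ r

/-- Rank 1: no two halfspaces are transverse. -/
def Rank1 {X : Type*} (M : MedianAlgebra X) : Prop :=
  ∀ h k : Set X, IsHalfspace M.med h → IsHalfspace M.med k → ¬ Transverse h k

/-- The operator `ℳ(A) = med(A × A × A)`. -/
def MSet {X : Type*} (med : X → X → X → X) (A : Set X) : Set X :=
  {p | ∃ a ∈ A, ∃ b ∈ A, ∃ c ∈ A, med a b c = p}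

/-- The median subalgebra generated by `A`: the smallest subset containing `A`
and closed under the median operation. -/
def medSpan {X : Type*} (med : X → X → X → X) (A : Set X) : Set X :=
  ⋂₀ {S : Set X | A ⊆ S ∧ ∀ a ∈ S, ∀ b ∈ S, ∀ c ∈ S, med a b c ∈ S}

/-- The coordinatewise median operation on a product. -/
def prodMed {X Y : Type*} (m₁ : X → X → X → X) (m₂ : Y → Y → Y → Y) :
    X × Y → X × Y → X × Y → X × Y :=
  fun p q r => (m₁ p.1 q.1 r.1, m₂ p.2 q.2 r.2)

section Aux

variable {T₁ T₂ : Type*} (M₁ : MedianAlgebra T₁) (M₂ : MedianAlgebra T₂)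

lemma MedianAlgebra.med_aba {X : Type*} (M : MedianAlgebra X) (a b : X) :
    M.med a b a = a := by
  rw [M.swap a b a, M.rot b a a, M.absorb]

lemma MedianAlgebra.med_abb {X : Type*} (M : MedianAlgebra X) (a b : X) :
    M.med a b b = b := by
  rw [M.rot a b b, M.absorb]

/-- Rectangle/corner lemma: a convex set of the product containing two opposite
corners of a "rectangle" contains the other corners. -/
lemma corner_mem {C : Set (T₁ × T₂)} (hC : IsConvexSet (prodMed M₁.med M₂.med) C)
    {a₁ b₁ : T₁} {a₂ b₂ : T₂} (h1 : (a₁, a₂) ∈ C) (h2 : (b₁, b₂) ∈ C) :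
    (a₁, b₂) ∈ C := by
  have := hC _ h1 _ h2 (a₁, b₂)
  simpa [prodMed, M₁.med_aba, M₂.med_abb] using this

/-- Membership in `h` does not depend on the second coordinate. -/
def Indep2 (h : Set (T₁ × T₂)) : Prop :=
  ∀ a : T₁, ∀ b b' : T₂, (a, b) ∈ h → (a, b') ∈ h

/-- Membership in `h` does not depend on the first coordinate. -/
def Indep1 (h : Set (T₁ × T₂)) : Prop :=
  ∀ b : T₂, ∀ a a' : T₁, (a, b) ∈ h → (a', b) ∈ h

lemma dichot {h : Set (T₁ × T₂)} (hh : IsHalfspace (prodMed M₁.med M₂.med) h) :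
    Indep2 h ∨ Indep1 h := by
  by_cases H : Indep2 h
  · exact Or.inl H
  · right
    rw [Indep2] at H
    push_neg at H
    obtain ⟨y₁, a₂, b₂, hm, hnm⟩ := H
    intro t₂ t₁ t₁' ht
    by_contra hnt
    have hA : (y₁, t₂) ∈ h := corner_mem M₁ M₂ hh.2.2.1 hm ht
    have hB : (y₁, t₂) ∈ hᶜ := corner_mem M₁ M₂ hh.2.2.2 hnm hnt
    exact hB hA

lemma proj1_half {h : Set (T₁ × T₂)} (hh : IsHalfspace (prodMed M₁.med M₂.med) h)
    (hi : Indep2 h) (z : T₂) : IsHalfspace M₁.med {t : T₁ | (t, z) ∈ h} := by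
  obtain ⟨⟨p, hp⟩, ⟨q, hq⟩, hc, hcc⟩ := hh
  refine ⟨⟨p.1, hi p.1 p.2 z (by simpa using hp)⟩,
    ⟨q.1, fun hmem => hq (by simpa using hi q.1 z q.2 hmem)⟩, ?_, ?_⟩
  · intro a ha b hb t
    have := hc (a, z) ha (b, z) hb (t, z)
    simpa [prodMed, M₂.absorb] using this
  · intro a ha b hb t
    have := hcc (a, z) ha (b, z) hb (t, z)
    simpa [prodMed, M₂.absorb] using this

lemma proj2_half {h : Set (T₁ × T₂)} (hh : IsHalfspace (prodMed M₁.med M₂.med) h)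
    (hi : Indep1 h) (z : T₁) : IsHalfspace M₂.med {t : T₂ | (z, t) ∈ h} := by
  obtain ⟨⟨p, hp⟩, ⟨q, hq⟩, hc, hcc⟩ := hh
  refine ⟨⟨p.2, hi p.2 p.1 z (by simpa using hp)⟩,
    ⟨q.2, fun hmem => hq (by simpa using hi q.2 z q.1 hmem)⟩, ?_, ?_⟩
  · intro a ha b hb t
    have := hc (z, a) ha (z, b) hb (z, t)
    simpa [prodMed, M₁.absorb] using this
  · intro a ha b hb t
    have := hcc (z, a) ha (z, b) hb (z, t)
    simpa [prodMed, M₁.absorb] using this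

lemma proj1_trans {h k : Set (T₁ × T₂)} (hih : Indep2 h) (hik : Indep2 k) (z : T₂)
    (ht : Transverse h k) :
    Transverse {t : T₁ | (t, z) ∈ h} {t : T₁ | (t, z) ∈ k} := by
  obtain ⟨⟨p, hp1, hp2⟩, ⟨q, hq1, hq2⟩, ⟨r, hr1, hr2⟩, ⟨s, hs1, hs2⟩⟩ := ht
  exact ⟨⟨p.1, hih p.1 p.2 z (by simpa using hp1), hik p.1 p.2 z (by simpa using hp2)⟩,
    ⟨q.1, hih q.1 q.2 z (by simpa using hq1),
      fun hm => hq2 (by simpa using hik q.1 z q.2 hm)⟩,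
    ⟨r.1, fun hm => hr1 (by simpa using hih r.1 z r.2 hm),
      hik r.1 r.2 z (by simpa using hr2)⟩,
    ⟨s.1, fun hm => hs1 (by simpa using hih s.1 z s.2 hm),
      fun hm => hs2 (by simpa using hik s.1 z s.2 hm)⟩⟩

lemma proj2_trans {h k : Set (T₁ × T₂)} (hih : Indep1 h) (hik : Indep1 k) (z : T₁)
    (ht : Transverse h k) :
    Transverse {t : T₂ | (z, t) ∈ h} {t : T₂ | (z, t) ∈ k} := by
  obtain ⟨⟨p, hp1, hp2⟩, ⟨q, hq1, hq2⟩, ⟨r, hr1, hr2⟩, ⟨s, hs1, hs2⟩⟩ := ht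
  exact ⟨⟨p.2, hih p.2 p.1 z (by simpa using hp1), hik p.2 p.1 z (by simpa using hp2)⟩,
    ⟨q.2, hih q.2 q.1 z (by simpa using hq1),
      fun hm => hq2 (by simpa using hik q.2 z q.1 hm)⟩,
    ⟨r.2, fun hm => hr1 (by simpa using hih r.2 z r.1 hm),
      hik r.2 r.1 z (by simpa using hr2)⟩,
    ⟨s.2, fun hm => hs1 (by simpa using hih s.2 z s.1 hm),
      fun hm => hs2 (by simpa using hik s.2 z s.1 hm)⟩⟩

lemma not_both {h : Set (T₁ × T₂)} (hh : IsHalfspace (prodMed M₁.med M₂.med) h)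
    (hi2 : Indep2 h) (hi1 : Indep1 h) : False := by
  obtain ⟨⟨p, hp⟩, ⟨q, hq⟩, -, -⟩ := hh
  have h1 : (p.1, q.2) ∈ h := hi2 p.1 p.2 q.2 (by simpa using hp)
  have h2 : (q.1, q.2) ∈ h := hi1 q.2 p.1 q.1 h1
  exact hq (by simpa using h2)

end Aux

/-- a product of two rank-1 median algebras contains no pentagonal
configuration: there is no 5-tuple `x` such that for every `i` (mod 5) some
wall of the product separates `{x (i-1), x i, x (i+1)}` from
`{x (i+2), x (i+3)}`. -/
theorem stmt5 {T₁ T₂ : Type*} (M₁ : MedianAlgebra T₁) (M₂ : MedianAlgebra T₂)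
    (h₁ : Rank1 M₁) (h₂ : Rank1 M₂) (x : Fin 5 → T₁ × T₂) :
    ¬ ∀ i : Fin 5, ∃ h : Set (T₁ × T₂),
        IsHalfspace (prodMed M₁.med M₂.med) h ∧
        x (i - 1) ∈ hᶜ ∧ x i ∈ hᶜ ∧ x (i + 1) ∈ hᶜ ∧
        x (i + 2) ∈ h ∧ x (i + 3) ∈ h := by
  intro H
  choose h hh hm1 hm2 hm3 hp1 hp2 using H
  have e1 : ∀ i : Fin 5, (i + 1) + 2 = i + 3 := by decide
  have e2 : ∀ i : Fin 5, (i + 1) + 1 = i + 2 := by decide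
  have e3 : ∀ i : Fin 5, (i + 1) + 3 = i - 1 := by decide
  have e4 : ∀ i : Fin 5, (i + 1) - 1 = i := by decide
  have trans : ∀ i : Fin 5, Transverse (h i) (h (i + 1)) := by
    intro i
    refine ⟨⟨x (i + 3), hp2 i, ?_⟩, ⟨x (i + 2), hp1 i, ?_⟩,
      ⟨x (i - 1), hm1 i, ?_⟩, ⟨x i, hm2 i, ?_⟩⟩
    · have := hp1 (i + 1); rwa [e1 i] at this
    · have := hm3 (i + 1); rwa [e2 i] at this
    · have := hp2 (i + 1); rwa [e3 i] at this
    · have := hm1 (i + 1); rwa [e4 i] at this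
  have dich : ∀ i, Indep2 (h i) ∨ Indep1 (h i) := fun i => dichot M₁ M₂ (hh i)
  have step12 : ∀ i : Fin 5, Indep2 (h i) → Indep1 (h (i + 1)) := by
    intro i hi
    rcases dich (i + 1) with hj | hj
    · exact absurd (proj1_trans hi hj (x 0).2 (trans i))
        (h₁ _ _ (proj1_half M₁ M₂ (hh i) hi (x 0).2)
          (proj1_half M₁ M₂ (hh (i + 1)) hj (x 0).2))
    · exact hj
  have step21 : ∀ i : Fin 5, Indep1 (h i) → Indep2 (h (i + 1)) := by
    intro i hi
    rcases dich (i + 1) with hj | hj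
    · exact hj
    · exact absurd (proj2_trans hi hj (x 0).1 (trans i))
        (h₂ _ _ (proj2_half M₁ M₂ (hh i) hi (x 0).1)
          (proj2_half M₁ M₂ (hh (i + 1)) hj (x 0).1))
  have e0 : (4 : Fin 5) + 1 = 0 := by decide
  rcases dich 0 with h0 | h0
  · have h1' := step12 0 h0
    have h2' := step21 1 h1'
    have h3' := step12 2 h2'
    have h4' := step21 3 h3'
    have h5' := step12 4 h4'
    rw [e0] at h5'
    exact not_both M₁ M₂ (hh 0) h0 h5'
  · have h1' := step21 0 h0
    have h2' := step12 1 h1'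
    have h3' := step21 2 h2'
    have h4' := step12 3 h3'
    have h5' := step21 4 h4'
    rw [e0] at h5'
    exact not_both M₁ M₂ (hh 0) h5' h0
end

section
/- Let T₁ and T₂ be rank-1 median algebras and let A be a subset of the product median algebra T₁ × T₂. Then the median subalgebra generated by A equals ℳ(A) := m(A × A × A), i.e., a single application of the median operation to all triples of points of A already yields a median subalgebra. -/
namespace MedianAlgebra

variable {X : Type*} (M : MedianAlgebra X)

local notation "m" => M.med

theorem p213 (a b c : X) : m b a c = m a b c := (M.swap a b c).symm
theorem p231 (a b c : X) : m b c a = m a b c := (M.rot a b c).symm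
theorem p312 (a b c : X) : m c a b = m a b c :=
  ((M.rot b c a).symm).trans ((M.rot a b c).symm)
theorem p132 (a b c : X) : m a c b = m a b c := (M.swap a c b).trans (p312 M a b c)
theorem p321 (a b c : X) : m c b a = m a b c := (M.swap c b a).trans (p231 M a b c)

theorem ab1 (a b : X) : m a a b = a := M.absorb a b
theorem ab2 (a b : X) : m a b a = a := (p132 M a a b).trans (M.absorb a b)
theorem ab3 (a b : X) : m b a a = a := (M.rot b a a).trans (M.absorb a b)

/-- the median is between any two of its arguments -/
theorem D1 (a b c : X) : m a b (m a b c) = m a b c := by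
  have h := M.assoc a b a c
  rw [ab2] at h
  exact h.symm

theorem meet_assoc (u x y z : X) : m u (m u x y) z = m u x (m u y z) := by
  have h := M.assoc x u y z
  rw [p213 M u x y, p213 M u y z, p213 M u (m u x y) z, p213 M u x (m u y z)] at h
  exact h

theorem meet_comm (u x y : X) : m u x y = m u y x := (p132 M u x y).symm

theorem le_trans' {u x y z : X} (h1 : m u x y = x) (h2 : m u y z = y) :
    m u x z = x := by
  calc m u x z = m u (m u x y) z := by rw [h1]
    _ = m u x (m u y z) := meet_assoc M u x y z
    _ = m u x y := by rw [h2]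
    _ = x := h1

theorem le_meet {u w y z : X} (h1 : m u w y = w) (h2 : m u w z = w) :
    m u w (m u y z) = w := by
  calc m u w (m u y z) = m u (m u w y) z := (meet_assoc M u w y z).symm
    _ = m u w z := by rw [h1]
    _ = w := h2

/-- G3 : y ∈ [a,x] → x ∈ [a,b] → x ∈ [y,b] -/
theorem G3 {a y x b : X} (h1 : m a y x = y) (h2 : m a x b = x) :
    m y x b = x := by
  have hy : m a x y = y := (p132 M a y x).trans h1
  have h2' : m b x a = x := (p321 M a x b).trans h2
  calc m y x b = m b x y := p321 M b x y
    _ = m b x (m a x y) := by rw [hy]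
    _ = m (m b x a) x y := (M.assoc b x a y).symm
    _ = m x x y := by rw [h2']
    _ = x := ab1 M x y

theorem antisym {a x y : X} (h1 : m a x y = x) (h2 : m a y x = y) : x = y :=
  calc x = m a x y := h1.symm
    _ = m a y x := meet_comm M a x y
    _ = y := h2

/-- BET : p ∈ [a,v] → n ∈ [p,v] → p ∈ [a,n] -/
theorem BET {a p v n : X} (h1 : m a p v = p) (h2 : m p n v = n) :
    m a p n = p := by
  set T := m a p n with hT
  have hn : m n p v = m p n v := p213 M p n v
  have e1 : T = m T p v := by
    calc T = m a p (m n p v) := by rw [hn, h2]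
      _ = m (m a p n) p v := (M.assoc a p n v).symm
      _ = m T p v := by rw [← hT]
  have e2 : m v T p = T := (p312 M T p v).trans e1.symm
  have e3 : m v p a = p := (p321 M a p v).trans h1
  have e4 : m T p a = p := G3 M e2 e3
  have e5 : m a T p = T := by
    have h := D1 M a p n
    rw [← hT] at h
    exact (p132 M a T p).symm.trans h
  have e6 : m a p T = p := (p321 M a p T).symm.trans e4
  exact antisym M e5 e6

/-- P1b (uniqueness): w between all pairs of a,b,c ⟹ w = median -/
theorem P1b {a b c w : X} (h1 : m a w b = w) (h2 : m b w c = w) (h3 : m a w c = w) :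
    m a b c = w := by
  set t := m a b c with ht
  have k1 : m a w t = w := le_meet M h1 h3
  have k2 : m b w t = w := by
    have h1' : m b w a = w := (p321 M a w b).trans h1
    have h := le_meet M h1' h2
    rwa [p213 M a b c, ← ht] at h
  have k3 : m a t b = t := by
    have h := D1 M a b c
    rw [← ht] at h
    exact (p132 M a t b).symm.trans h
  have k4 : m w t b = t := G3 M k1 k3
  have k5 : m w t b = w := (p312 M w t b).symm.trans k2
  exact k4.symm.trans k5

/-- MEET-MED : m c u v ≤_c m u v x -/
theorem meetMed (c u v x : X) : m c (m c u v) (m u v x) = m c u v := by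
  set μ := m c u v with hμ
  set s := m u v x with hs
  set T := m c μ s with hT
  have s2 : m s c u = m μ u x := by
    calc m s c u = m c u s := p312 M c u s
      _ = m c u (m v u x) := by rw [hs, p213 M u v x]
      _ = m (m c u v) u x := (M.assoc c u v x).symm
      _ = m μ u x := by rw [← hμ]
  have s1 : T = m (m s c u) c v := by
    have e : m c μ s = m s c μ := p231 M s c μ
    have e2 : μ = m u c v := hμ.trans (p213 M u c v)
    calc T = m s c μ := hT.trans e
      _ = m s c (m u c v) := by rw [e2]
      _ = m (m s c u) c v := (M.assoc s c u v).symm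
  set ω := m c u x with hω
  have s3 : m μ u x = m ω u v := by
    calc m μ u x = m (m c u v) u x := by rw [hμ]
      _ = m c u (m v u x) := M.assoc c u v x
      _ = m (m v u x) u c := p321 M (m v u x) u c
      _ = m v u (m x u c) := M.assoc v u x c
      _ = m (m x u c) u v := p321 M (m x u c) u v
      _ = m ω u v := by rw [p321 M c u x, ← hω]
  have s4 : T = m ω v μ := by
    calc T = m (m ω u v) c v := by rw [s1, s2, s3]
      _ = m (m ω v u) v c := by rw [p132 M ω v u, p132 M (m ω v u) v c]
      _ = m ω v (m u v c) := M.assoc ω v u c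
      _ = m ω v μ := by rw [(p312 M u v c).symm.trans hμ.symm]
  have s5 : m v T μ = T := by
    have h := D1 M v μ ω
    have e : m v μ ω = m ω v μ := p231 M ω v μ
    rw [e, ← s4] at h
    exact (meet_comm M v T μ).trans h
  have s6 : m v μ u = μ := by
    have h := D1 M v u c
    rw [p321 M c u v, ← hμ] at h
    exact (meet_comm M v μ u).trans h
  have s7 : m v T u = T := le_trans' M s5 s6
  have s8 : m c T μ = T := by
    have h := D1 M c μ s
    rw [← hT] at h
    exact (meet_comm M c T μ).trans h
  have s9 : m c μ u = μ := by
    have h := D1 M c u v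
    rw [← hμ] at h
    exact (meet_comm M c μ u).trans h
  have s10 : m c μ v = μ := by
    have h := D1 M c v u
    rw [meet_comm M c v u, ← hμ] at h
    exact (meet_comm M c μ v).trans h
  have s11 : m c T u = T := le_trans' M s8 s9
  have s12 : m c T v = T := le_trans' M s8 s10
  have s13 : m u T v = T := (p321 M u T v).symm.trans s7
  have h := P1b M s11 s13 s12
  rw [← hμ] at h
  exact h.symm

/-- MICRO : w ≤_c u → w ≤_c v → w ≤_c m u v x -/
theorem micro {c w u v : X} (hu : m c w u = w) (hv : m c w v = w) (x : X) :
    m c w (m u v x) = w :=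
  le_trans' M (le_meet M hu hv) (meetMed M c u v x)

/-- key lemma for the separation theorem -/
theorem sep_key {u v w k₁ k₂ : X} (hu : m u w k₁ = w) (hv : m v w k₂ = w) (x : X) :
    m (m u v x) w (m k₁ k₂ w) = w := by
  set c := m k₁ k₂ w with hc
  have e1 : m c w u = w := by
    have : m u w c = w := by
      calc m u w c = m u w (m k₁ w k₂) := by rw [hc, p132 M k₁ w k₂]
        _ = m (m u w k₁) w k₂ := (M.assoc u w k₁ k₂).symm
        _ = m w w k₂ := by rw [hu]
        _ = w := ab1 M w k₂
    exact (p321 M u w c).trans this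
  have e2 : m c w v = w := by
    have : m v w c = w := by
      have hc2 : c = m k₂ w k₁ := by rw [hc, p213 M k₂ k₁ w, p132 M k₂ w k₁]
      calc m v w c = m v w (m k₂ w k₁) := by rw [← hc2]
        _ = m (m v w k₂) w k₁ := (M.assoc v w k₂ k₁).symm
        _ = m w w k₁ := by rw [hv]
        _ = w := ab1 M w k₁
    exact (p321 M v w c).trans this
  have h := micro M e1 e2 x
  exact (p321 M c w (m u v x)).trans h

/-- MAIN-TRI : the median m' of t₁,t₂,x lies in [m u m' t₁, t₂] -/
theorem mainTri (u t₁ t₂ x : X) :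
    m (m u (m t₁ t₂ x) t₁) (m t₁ t₂ x) t₂ = m t₁ t₂ x := by
  set m' := m t₁ t₂ x with hm'
  have a1 : m t₂ t₁ m' = m' := by
    have h := D1 M t₂ t₁ x
    rwa [p213 M t₁ t₂ x, ← hm'] at h
  have a2 : m t₂ m' (m t₁ m' u) = m' := by
    have h := meetMed M t₂ t₁ m' u
    rwa [a1] at h
  have a3 : m t₁ m' u = m u m' t₁ := p321 M u m' t₁
  rw [a3] at a2
  exact (p321 M t₂ m' (m u m' t₁)).trans a2

/-- upgrade the left endpoint using t₁ ∈ [u,k₁] -/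
theorem upg1 {u t₁ k₁ t₂ m' : X} (h : m (m u m' t₁) m' t₂ = m')
    (ht : m u t₁ k₁ = t₁) : m (m u m' k₁) m' t₂ = m' := by
  set Q := m u m' t₁ with hQ
  set A := m u m' k₁ with hA
  have b0 : m u t₁ A = Q := by
    calc m u t₁ A = m u (m u t₁ m') k₁ := by rw [hA, (meet_assoc M u t₁ m' k₁).symm]
      _ = m u (m u m' t₁) k₁ := by rw [meet_comm M u t₁ m']
      _ = m u m' (m u t₁ k₁) := meet_assoc M u m' t₁ k₁
      _ = Q := by rw [ht, ← hQ]
  have b1 : m u Q A = Q := by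
    calc m u Q A = m u m' (m u t₁ A) := by rw [hQ, meet_assoc M u m' t₁ A]
      _ = m u m' Q := by rw [b0]
      _ = Q := by rw [hQ]; exact D1 M u m' t₁
  have b2 : m u A m' = A := by
    have h2 := D1 M u m' k₁
    rw [← hA] at h2
    exact (meet_comm M u A m').trans h2
  have b3 : m Q A m' = A := G3 M b1 b2
  exact G3 M b3 h

/-- upgrade the right endpoint using t₂ ∈ [u,k₂] -/
theorem upg2 {u A m' t₂ k₂ : X} (hα : m u A m' = A) (hβ : m A m' t₂ = m')
    (hγ : m u t₂ k₂ = t₂) : m A m' k₂ = m' := by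
  set G := m A m' k₂ with hG
  set P := m k₂ m' t₂ with hP
  have u1 : m k₂ t₂ u = t₂ := (p321 M u t₂ k₂).trans hγ
  have u2 : m k₂ P t₂ = P := by
    have h := D1 M k₂ t₂ m'
    rw [meet_comm M k₂ t₂ m', ← hP] at h
    exact (meet_comm M k₂ P t₂).trans h
  have u3 : m k₂ P u = P := le_trans' M u2 u1
  have u4 : m k₂ P m' = P := by
    have h := D1 M k₂ m' t₂
    rw [← hP] at h
    exact (meet_comm M k₂ P m').trans h
  have u5 : m k₂ P (m k₂ u m') = P := le_meet M u3 u4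
  have u6 : m k₂ (m k₂ u m') A = m k₂ u m' := by
    have h := meetMed M k₂ u m' A
    rwa [(meet_comm M u A m').symm.trans hα] at h
  have u7 : m k₂ P A = P := le_trans' M u5 u6
  have u8 : m G m' P = m' := by
    have c2 : m k₂ m' P = P := by
      have h := D1 M k₂ m' t₂
      rwa [← hP] at h
    calc m G m' P = m A m' (m k₂ m' P) := by rw [hG]; exact M.assoc A m' k₂ P
      _ = m A m' P := by rw [c2]
      _ = m A m' (m t₂ m' k₂) := by rw [(p321 M k₂ m' t₂).trans hP.symm]
      _ = m (m A m' t₂) m' k₂ := (M.assoc A m' t₂ k₂).symm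
      _ = m m' m' k₂ := by rw [hβ]
      _ = m' := ab1 M m' k₂
  have u9 : m G P k₂ = P := by
    have d2 : m m' k₂ P = P := by
      have h := D1 M m' k₂ t₂
      rw [(p213 M m' k₂ t₂).symm.trans hP.symm] at h
      exact h
    have d3 : m A k₂ P = P := (p312 M k₂ P A).trans u7
    have d1 : m G k₂ P = P := by
      calc m G k₂ P = m (m A k₂ m') k₂ P := by rw [hG, p132 M A k₂ m']
        _ = m A k₂ (m m' k₂ P) := M.assoc A k₂ m' P
        _ = m A k₂ P := by rw [d2]
        _ = P := d3
    exact (meet_comm M G P k₂).trans d1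
  have u10 : m G m' k₂ = m' := le_trans' M u8 u9
  have u11 : m G m' k₂ = G := by
    calc m G m' k₂ = m A m' (m k₂ m' k₂) := by rw [hG]; exact M.assoc A m' k₂ k₂
      _ = m A m' k₂ := by rw [ab2 M k₂ m']
      _ = G := by rw [hG]
  exact u11.symm.trans u10

/-- J-convexity : t₁ ∈ [u,k₁] → t₂ ∈ [u,k₂] → the median of t₁,t₂,x lies in
[u, m k₁ k₂ (median)] -/
theorem jconv {u t₁ k₁ t₂ k₂ : X} (h₁ : m u t₁ k₁ = t₁) (h₂ : m u t₂ k₂ = t₂)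
    (x : X) : m u (m t₁ t₂ x) (m k₁ k₂ (m t₁ t₂ x)) = m t₁ t₂ x := by
  set m' := m t₁ t₂ x with hm'
  have f1 : m (m u m' t₁) m' t₂ = m' := mainTri M u t₁ t₂ x
  have f2 : m (m u m' k₁) m' t₂ = m' := upg1 M f1 h₁
  have f3 : m u (m u m' k₁) m' = m u m' k₁ := by
    have h := D1 M u m' k₁
    exact (meet_comm M u (m u m' k₁) m').trans h
  have f4 : m (m u m' k₁) m' k₂ = m' := upg2 M f3 f2 h₂
  calc m u m' (m k₁ k₂ m') = m u m' (m k₁ m' k₂) := by rw [p132 M k₁ m' k₂]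
    _ = m (m u m' k₁) m' k₂ := (M.assoc u m' k₁ k₂).symm
    _ = m' := f4

/-- Separation of a point from a nonempty convex set by a halfspace. -/
theorem separation {C : Set X} (hC : IsConvexSet m C) (hne : C.Nonempty)
    {w : X} (hw : w ∉ C) :
    ∃ K : Set X, IsHalfspace m K ∧ C ⊆ K ∧ w ∉ K := by
  classical
  set S : Set (Set X) := {D | IsConvexSet m D ∧ C ⊆ D ∧ w ∉ D} with hS
  have hCS : C ∈ S := ⟨hC, subset_rfl, hw⟩
  obtain ⟨K, hCK, hKmax⟩ := zorn_subset_nonempty S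
    (fun c hcS hchain hcne => by
      refine ⟨⋃₀ c, ⟨?_, ?_, ?_⟩, fun s hs => Set.subset_sUnion_of_mem hs⟩
      · intro a ha b hb x
        obtain ⟨D₁, hD₁, haD⟩ := ha
        obtain ⟨D₂, hD₂, hbD⟩ := hb
        rcases hchain.total hD₁ hD₂ with hsub | hsub
        · exact ⟨D₂, hD₂, (hcS hD₂).1 a (hsub haD) b hbD x⟩
        · exact ⟨D₁, hD₁, (hcS hD₁).1 a haD b (hsub hbD) x⟩
      · obtain ⟨D, hD⟩ := hcne
        exact subset_trans (hcS hD).2.1 (Set.subset_sUnion_of_mem hD)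
      · rintro ⟨D, hD, hwD⟩
        exact (hcS hD).2.2 hwD) C hCS
  have hKS : K ∈ S := hKmax.1
  have hKconv : IsConvexSet m K := hKS.1
  have hwK : w ∉ K := hKS.2.2
  -- key claim
  have key : ∀ p, p ∉ K → ∃ k ∈ K, m p w k = w := by
    intro p hp
    set J : Set X := {t | ∃ k ∈ K, m p t k = t} with hJ
    have hKJ : K ⊆ J := fun k hk => ⟨k, hk, ab3 M k p⟩
    have hJconv : IsConvexSet m J := by
      rintro t₁ ⟨k₁, hk₁, ht₁⟩ t₂ ⟨k₂, hk₂, ht₂⟩ x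
      exact ⟨m k₁ k₂ (m t₁ t₂ x), hKconv k₁ hk₁ k₂ hk₂ (m t₁ t₂ x),
        jconv M ht₁ ht₂ x⟩
    by_cases hwJ : w ∈ J
    · obtain ⟨k, hk, hmk⟩ := hwJ
      exact ⟨k, hk, hmk⟩
    · exfalso
      have hJS : J ∈ S := ⟨hJconv, subset_trans hKS.2.1 hKJ, hwJ⟩
      have : J ⊆ K := hKmax.2 hJS (le_trans (le_refl _) hKJ)
      obtain ⟨k₀, hk₀⟩ : K.Nonempty := hne.mono hKS.2.1
      exact hp (this ⟨k₀, hk₀, ab1 M p k₀⟩)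
  -- complement convex
  have hKcconv : IsConvexSet m Kᶜ := by
    intro u hu v hv x
    by_contra hs
    have hsK : m u v x ∈ K := not_not.mp hs
    obtain ⟨k₁, hk₁, hw₁⟩ := key u hu
    obtain ⟨k₂, hk₂, hw₂⟩ := key v hv
    have hkey := sep_key M hw₁ hw₂ x
    set c := m k₁ k₂ w with hc
    have hcK : c ∈ K := hKconv k₁ hk₁ k₂ hk₂ w
    have : m (m u v x) c w ∈ K := hKconv _ hsK c hcK w
    rw [p132 M (m u v x) w c, hkey] at this
    exact hwK this
  exact ⟨K, ⟨hne.mono hKS.2.1, ⟨w, hwK⟩, hKconv, hKcconv⟩, hKS.2.1, hwK⟩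

/-- Two points are on the same side of `w` if some halfspace contains both
but not `w`. -/
def Sim (w x y : X) : Prop :=
  ∃ h : Set X, IsHalfspace M.med h ∧ x ∈ h ∧ y ∈ h ∧ w ∉ h

theorem sim_symm {w x y : X} (h : M.Sim w x y) : M.Sim w y x := by
  obtain ⟨h, hh, hx, hy, hw⟩ := h
  exact ⟨h, hh, hy, hx, hw⟩

theorem sim_trans (hr : Rank1 M) {w x y z : X}
    (h1 : M.Sim w x y) (h2 : M.Sim w y z) : M.Sim w x z := by
  obtain ⟨h, hh, hx, hy, hw⟩ := h1
  obtain ⟨k, hk, hy', hz, hw'⟩ := h2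
  have hnt := hr h k hh hk
  by_cases hB : (h ∩ kᶜ).Nonempty
  · by_cases hC : (hᶜ ∩ k).Nonempty
    · exact absurd ⟨⟨y, hy, hy'⟩, hB, hC, ⟨w, hw, hw'⟩⟩ hnt
    · -- k ⊆ h
      have hzk : z ∈ h := by
        by_contra hzh
        exact hC ⟨z, hzh, hz⟩
      exact ⟨h, hh, hx, hzk, hw⟩
  · -- h ⊆ k
    have hxk : x ∈ k := by
      by_contra hxk
      exact hB ⟨x, hx, hxk⟩
    exact ⟨k, hk, hxk, hz, hw'⟩

theorem sim_self {w x : X} (hne : x ≠ w) : M.Sim w x x := by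
  have hconv : IsConvexSet m {x} := by
    intro a ha b hb t
    rw [Set.mem_singleton_iff] at ha hb
    rw [ha, hb]
    simp only [Set.mem_singleton_iff]
    exact ab1 M x t
  have hw : w ∉ ({x} : Set X) := by
    simp only [Set.mem_singleton_iff]
    exact fun h => hne h.symm
  obtain ⟨K, hK, hsub, hwK⟩ := separation M hconv ⟨x, rfl⟩ hw
  exact ⟨K, hK, hsub rfl, hsub rfl, hwK⟩

theorem not_sim_btw {w x y : X} (h : ¬ M.Sim w x y) : m x w y = w := by
  by_contra hne
  apply h
  set C : Set X := ⋂₀ {D | IsConvexSet m D ∧ x ∈ D ∧ y ∈ D} with hC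
  have hCconv : IsConvexSet m C := by
    intro a ha b hb t
    intro D hD
    exact hD.1 a (ha D hD) b (hb D hD) t
  have hxC : x ∈ C := fun D hD => hD.2.1
  have hyC : y ∈ C := fun D hD => hD.2.2
  have hwC : w ∉ C := by
    intro hwC
    -- separate {g} from w where g = m x w y
    set g := m x w y with hg
    have hgconv : IsConvexSet m {g} := by
      intro a ha b hb t
      rw [Set.mem_singleton_iff] at ha hb
      rw [ha, hb]
      simp only [Set.mem_singleton_iff]
      exact ab1 M g t
    have hwg : w ∉ ({g} : Set X) := by
      simp only [Set.mem_singleton_iff]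
      exact fun h => hne h.symm
    obtain ⟨K, hK, hsub, hwK⟩ := separation M hgconv ⟨g, rfl⟩ hwg
    have hgK : g ∈ K := hsub rfl
    -- x and y cannot both be in K
    have hnotboth : x ∉ K ∨ y ∉ K := by
      by_contra hboth
      push_neg at hboth
      have : C ⊆ K := Set.sInter_subset_of_mem ⟨hK.2.2.1, hboth.1, hboth.2⟩
      exact hwK (this hwC)
    rcases hnotboth with hx | hy
    · have : m x w y ∈ Kᶜ := hK.2.2.2 x hx w hwK y
      exact this hgK
    · have : m y w x ∈ Kᶜ := hK.2.2.2 y hy w hwK x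
      rw [p321 M x w y, ← hg] at this
      exact this hgK
  obtain ⟨K, hK, hsub, hwK⟩ := separation M hCconv ⟨x, hxC⟩ hwC
  exact ⟨K, hK, hsub hxC, hsub hyC, hwK⟩

theorem not_sim_w {w y : X} (h : M.Sim w w y) : False := by
  obtain ⟨h, _, hw, _, hw'⟩ := h
  exact hw' hw

/-- two-member convexity of similarity classes (rank 1) -/
theorem sim_med (hr : Rank1 M) {w x u₁ u₂ : X} (h1 : M.Sim w u₁ x)
    (h2 : M.Sim w u₂ x) (t : X) : M.Sim w (m u₁ u₂ t) x := by
  obtain ⟨h, hh, hu₁, hx, hw⟩ := h1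
  obtain ⟨k, hk, hu₂, hx', hw'⟩ := h2
  have hnt := hr h k hh hk
  by_cases hB : (h ∩ kᶜ).Nonempty
  · by_cases hC : (hᶜ ∩ k).Nonempty
    · exact absurd ⟨⟨x, hx, hx'⟩, hB, hC, ⟨w, hw, hw'⟩⟩ hnt
    · -- k ⊆ h
      have hu₂h : u₂ ∈ h := by
        by_contra hcon
        exact hC ⟨u₂, hcon, hu₂⟩
      exact ⟨h, hh, hh.2.2.1 u₁ hu₁ u₂ hu₂h t, hx, hw⟩
  · -- h ⊆ k
    have hu₁k : u₁ ∈ k := by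
      by_contra hcon
      exact hB ⟨u₁, hu₁, hcon⟩
    exact ⟨k, hk, hk.2.2.1 u₁ hu₁k u₂ hu₂ t, hx', hw'⟩

end MedianAlgebra

section Konig

variable {P : Type*} {S₁ S₂ : P → P → Prop} {A : Set P}

/-- auxiliary contradiction for the König-type cover lemma -/
theorem konig_aux
    (sym₁ : ∀ {a b}, S₁ a b → S₁ b a) (tr₁ : ∀ {a b c}, S₁ a b → S₁ b c → S₁ a c)
    (sym₂ : ∀ {a b}, S₂ a b → S₂ b a) (tr₂ : ∀ {a b c}, S₂ a b → S₂ b c → S₂ a c)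
    (noTri : ∀ a ∈ A, ∀ b ∈ A, ∀ c ∈ A,
      ¬((¬S₁ a b ∧ ¬S₂ a b) ∧ (¬S₁ a c ∧ ¬S₂ a c) ∧ (¬S₁ b c ∧ ¬S₂ b c)))
    (a b c₁ c₂ c₄ : P)
    (ha : a ∈ A) (hb : b ∈ A) (hc₁ : c₁ ∈ A) (hc₂ : c₂ ∈ A) (hc₄ : c₄ ∈ A)
    (hab₁ : ¬S₁ a b) (hab₂ : ¬S₂ a b)
    (h11 : ¬S₁ c₁ a) (h12 : ¬S₁ c₁ b) (h13 : S₂ c₁ a)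
    (h21 : ¬S₂ c₂ a) (h22 : ¬S₂ c₂ b)
    (h41 : ¬S₂ c₄ a) (h42 : ¬S₁ c₄ b) : False := by
  classical
  -- ¬S₂ c₁ b
  have n1 : ¬S₂ c₁ b := fun h => hab₂ (tr₂ (sym₂ h13) h)
  -- c₂'s disjunction from noTri a b c₂
  have d : S₁ c₂ a ∨ S₁ c₂ b := by
    have h := noTri a ha b hb c₂ hc₂
    by_contra hcon
    push_neg at hcon
    exact h ⟨⟨hab₁, hab₂⟩, ⟨fun h' => hcon.1 (sym₁ h'), fun h' => h21 (sym₂ h')⟩,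
      ⟨fun h' => hcon.2 (sym₁ h'), fun h' => h22 (sym₂ h')⟩⟩
  have n2 : ¬S₁ c₁ c₂ := fun h => d.elim (fun g => h11 (tr₁ h g)) (fun g => h12 (tr₁ h g))
  have n3 : ¬S₂ c₁ c₂ := fun h => h21 (tr₂ (sym₂ h) h13)
  -- from noTri b c₁ c₂ : S₁ c₂ b
  have e1 : S₁ c₂ b := by
    have h := noTri b hb c₁ hc₁ c₂ hc₂
    by_contra hcon
    exact h ⟨⟨fun h' => h12 (sym₁ h'), fun h' => n1 (sym₂ h')⟩,
      ⟨fun h' => hcon (sym₁ h'), fun h' => h22 (sym₂ h')⟩, ⟨n2, n3⟩⟩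
  have n4 : ¬S₁ c₂ a := fun h => hab₁ (tr₁ (sym₁ h) e1)
  by_cases hS : S₁ c₄ c₁
  · have n5 : ¬S₁ c₄ a := fun h => h11 (tr₁ (sym₁ hS) h)
    -- from noTri a c₂ c₄ : S₂ c₂ c₄
    have f : S₂ c₂ c₄ := by
      have h := noTri a ha c₂ hc₂ c₄ hc₄
      by_contra hcon
      exact h ⟨⟨fun h' => n4 (sym₁ h'), fun h' => h21 (sym₂ h')⟩,
        ⟨fun h' => n5 (sym₁ h'), fun h' => h41 (sym₂ h')⟩,
        ⟨fun h' => h42 (tr₁ (sym₁ h') e1), hcon⟩⟩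
    have n6 : ¬S₂ c₄ b := fun h => h22 (tr₂ f h)
    exact noTri a ha b hb c₄ hc₄
      ⟨⟨hab₁, hab₂⟩, ⟨fun h' => n5 (sym₁ h'), fun h' => h41 (sym₂ h')⟩,
        ⟨fun h' => h42 (sym₁ h'), fun h' => n6 (sym₂ h')⟩⟩
  · have n7 : ¬S₂ c₄ c₁ := fun h => h41 (tr₂ h h13)
    -- from noTri c₄ c₁ b : S₂ c₄ b
    have g : S₂ c₄ b := by
      have h := noTri c₄ hc₄ c₁ hc₁ b hb
      by_contra hcon
      exact h ⟨⟨hS, n7⟩, ⟨h42, hcon⟩, ⟨h12, n1⟩⟩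
    have n8 : ¬S₂ c₂ c₄ := fun h => h22 (tr₂ h g)
    have n9 : ¬S₁ c₂ c₄ := fun h => h42 (tr₁ (sym₁ h) e1)
    exact noTri c₁ hc₁ c₂ hc₂ c₄ hc₄
      ⟨⟨n2, n3⟩, ⟨fun h' => hS (sym₁ h'), fun h' => n7 (sym₂ h')⟩, ⟨n9, n8⟩⟩

/-- König-type cover lemma: a triangle-free compatibility structure is covered
by two similarity classes. -/
theorem konig_cover
    (sym₁ : ∀ {a b}, S₁ a b → S₁ b a) (tr₁ : ∀ {a b c}, S₁ a b → S₁ b c → S₁ a c)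
    (sym₂ : ∀ {a b}, S₂ a b → S₂ b a) (tr₂ : ∀ {a b c}, S₂ a b → S₂ b c → S₂ a c)
    (noTri : ∀ a ∈ A, ∀ b ∈ A, ∀ c ∈ A,
      ¬((¬S₁ a b ∧ ¬S₂ a b) ∧ (¬S₁ a c ∧ ¬S₂ a c) ∧ (¬S₁ b c ∧ ¬S₂ b c)))
    (hne : A.Nonempty) :
    ∃ (R₁ R₂ : P → P → Prop) (x y : P),
      (R₁ = S₁ ∨ R₁ = S₂) ∧ (R₂ = S₁ ∨ R₂ = S₂) ∧ ∀ c ∈ A, R₁ c x ∨ R₂ c y := by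
  classical
  by_cases hpair : ∃ a ∈ A, ∃ b ∈ A, ¬S₁ a b ∧ ¬S₂ a b
  · obtain ⟨a, ha, b, hb, hab₁, hab₂⟩ := hpair
    by_cases cov1 : ∀ c ∈ A, S₁ c a ∨ S₁ c b
    · exact ⟨S₁, S₁, a, b, Or.inl rfl, Or.inl rfl, cov1⟩
    by_cases cov2 : ∀ c ∈ A, S₂ c a ∨ S₂ c b
    · exact ⟨S₂, S₂, a, b, Or.inr rfl, Or.inr rfl, cov2⟩
    by_cases cov3 : ∀ c ∈ A, S₁ c a ∨ S₂ c b
    · exact ⟨S₁, S₂, a, b, Or.inl rfl, Or.inr rfl, cov3⟩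
    by_cases cov4 : ∀ c ∈ A, S₂ c a ∨ S₁ c b
    · exact ⟨S₂, S₁, a, b, Or.inr rfl, Or.inl rfl, cov4⟩
    exfalso
    push_neg at cov1 cov2 cov3 cov4
    obtain ⟨c₁, hc₁, h11, h12⟩ := cov1
    obtain ⟨c₂, hc₂, h21, h22⟩ := cov2
    obtain ⟨c₃, hc₃, h31, h32⟩ := cov3
    obtain ⟨c₄, hc₄, h41, h42⟩ := cov4
    -- c₁'s disjunction
    have d1 : S₂ c₁ a ∨ S₂ c₁ b := by
      have h := noTri a ha b hb c₁ hc₁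
      by_contra hcon
      push_neg at hcon
      exact h ⟨⟨hab₁, hab₂⟩, ⟨fun h' => h11 (sym₁ h'), fun h' => hcon.1 (sym₂ h')⟩,
        ⟨fun h' => h12 (sym₁ h'), fun h' => hcon.2 (sym₂ h')⟩⟩
    rcases d1 with d1a | d1b
    · exact @konig_aux P S₁ S₂ A sym₁ tr₁ sym₂ tr₂ noTri a b c₁ c₂ c₄ ha hb hc₁ hc₂ hc₄
        hab₁ hab₂ h11 h12 d1a h21 h22 h41 h42
    · -- swap the roles of a and b ; c₃ plays the role of c₄
      exact @konig_aux P S₁ S₂ A sym₁ tr₁ sym₂ tr₂ noTri b a c₁ c₂ c₃ hb ha hc₁ hc₂ hc₃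
        (fun h => hab₁ (sym₁ h)) (fun h => hab₂ (sym₂ h))
        h12 h11 d1b h22 h21 h32 h31
  · push_neg at hpair
    obtain ⟨a₀, ha₀⟩ := hne
    refine ⟨S₁, S₂, a₀, a₀, Or.inl rfl, Or.inr rfl, fun c hc => ?_⟩
    by_cases h1 : S₁ c a₀
    · exact Or.inl h1
    · exact Or.inr (hpair c hc a₀ ha₀ h1)

end Konig

/-- if `T₁`, `T₂` are rank-1 median algebras and
`A ⊆ T₁ × T₂`, then the median subalgebra generated by `A` equals
`ℳ(A) = med(A × A × A)`. -/
theorem stmt6 {T₁ T₂ : Type*} (M₁ : MedianAlgebra T₁) (M₂ : MedianAlgebra T₂)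
    (h₁ : Rank1 M₁) (h₂ : Rank1 M₂) (A : Set (T₁ × T₂)) :
    medSpan (prodMed M₁.med M₂.med) A = MSet (prodMed M₁.med M₂.med) A := by
  classical
  apply Set.Subset.antisymm
  · -- hard direction
    intro w hw
    rcases A.eq_empty_or_nonempty with hA | hAne
    · exfalso
      have hmem : (∅ : Set (T₁ × T₂)) ∈
          {S : Set (T₁ × T₂) | A ⊆ S ∧ ∀ a ∈ S, ∀ b ∈ S, ∀ c ∈ S,
            prodMed M₁.med M₂.med a b c ∈ S} :=
        ⟨by rw [hA], fun a ha => absurd ha (Set.notMem_empty a)⟩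
      exact Set.notMem_empty w (hw _ hmem)
    by_cases hwA : w ∈ A
    · exact ⟨w, hwA, w, hwA, w, hwA,
        Prod.ext_iff.mpr ⟨M₁.absorb w.1 w.1, M₂.absorb w.2 w.2⟩⟩
    by_contra hni
    set S₁ : (T₁ × T₂) → (T₁ × T₂) → Prop := fun p q => M₁.Sim w.1 p.1 q.1 with hS₁
    set S₂ : (T₁ × T₂) → (T₁ × T₂) → Prop := fun p q => M₂.Sim w.2 p.2 q.2 with hS₂
    have sym₁ : ∀ {a b}, S₁ a b → S₁ b a := fun h => M₁.sim_symm h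
    have tr₁ : ∀ {a b c}, S₁ a b → S₁ b c → S₁ a c := fun h h' => M₁.sim_trans h₁ h h'
    have sym₂ : ∀ {a b}, S₂ a b → S₂ b a := fun h => M₂.sim_symm h
    have tr₂ : ∀ {a b c}, S₂ a b → S₂ b c → S₂ a c := fun h h' => M₂.sim_trans h₂ h h'
    have noTri : ∀ a ∈ A, ∀ b ∈ A, ∀ c ∈ A,
        ¬((¬S₁ a b ∧ ¬S₂ a b) ∧ (¬S₁ a c ∧ ¬S₂ a c) ∧ (¬S₁ b c ∧ ¬S₂ b c)) := by
      rintro a ha b hb c hc ⟨⟨nab₁, nab₂⟩, ⟨nac₁, nac₂⟩, ⟨nbc₁, nbc₂⟩⟩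
      apply hni
      refine ⟨a, ha, b, hb, c, hc, Prod.ext_iff.mpr ⟨?_, ?_⟩⟩
      · exact M₁.P1b (M₁.not_sim_btw nab₁) (M₁.not_sim_btw nbc₁)
          (M₁.not_sim_btw nac₁)
      · exact M₂.P1b (M₂.not_sim_btw nab₂) (M₂.not_sim_btw nbc₂)
          (M₂.not_sim_btw nac₂)
    have self : ∀ a ∈ A, S₁ a a ∨ S₂ a a := by
      intro a ha
      by_cases hfst : a.1 = w.1
      · right
        have : a.2 ≠ w.2 := by
          intro hsnd
          exact hwA (Prod.ext_iff.mpr ⟨hfst, hsnd⟩ ▸ ha)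
        exact M₂.sim_self this
      · exact Or.inl (M₁.sim_self hfst)
    obtain ⟨R₁, R₂, x, y, hR₁, hR₂, hcov⟩ :=
      @konig_cover (T₁ × T₂) S₁ S₂ A sym₁ tr₁ sym₂ tr₂ noTri hAne
    have lineconv : ∀ (R : (T₁ × T₂) → (T₁ × T₂) → Prop), (R = S₁ ∨ R = S₂) →
        ∀ z p q r, R p z → R q z → R (prodMed M₁.med M₂.med p q r) z := by
      rintro R (rfl | rfl) z p q r hp hq
      · exact M₁.sim_med h₁ hp hq r.1
      · exact M₂.sim_med h₂ hp hq r.2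
    have mp132 : ∀ p q r : T₁ × T₂,
        prodMed M₁.med M₂.med p r q = prodMed M₁.med M₂.med p q r := by
      intro p q r
      exact Prod.ext_iff.mpr ⟨M₁.p132 p.1 q.1 r.1, M₂.p132 p.2 q.2 r.2⟩
    have mp312 : ∀ p q r : T₁ × T₂,
        prodMed M₁.med M₂.med r p q = prodMed M₁.med M₂.med p q r := by
      intro p q r
      exact Prod.ext_iff.mpr ⟨M₁.p312 p.1 q.1 r.1, M₂.p312 p.2 q.2 r.2⟩
    set U : Set (T₁ × T₂) := {c | R₁ c x} ∪ {c | R₂ c y} with hU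
    have hUmem : U ∈ {S : Set (T₁ × T₂) | A ⊆ S ∧ ∀ a ∈ S, ∀ b ∈ S, ∀ c ∈ S,
        prodMed M₁.med M₂.med a b c ∈ S} := by
      constructor
      · intro c hc
        exact (hcov c hc).elim Or.inl Or.inr
      · rintro p (hp | hp) q (hq | hq) r (hr | hr)
        · exact Or.inl (lineconv R₁ hR₁ x p q r hp hq)
        · exact Or.inl (lineconv R₁ hR₁ x p q r hp hq)
        · refine Or.inl ?_
          rw [mp132 p r q]
          exact lineconv R₁ hR₁ x p r q hp hr
        · refine Or.inr ?_
          rw [mp312 q r p]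
          exact lineconv R₂ hR₂ y q r p hq hr
        · refine Or.inl ?_
          rw [mp312 q r p]
          exact lineconv R₁ hR₁ x q r p hq hr
        · refine Or.inr ?_
          rw [mp132 p r q]
          exact lineconv R₂ hR₂ y p r q hp hr
        · exact Or.inr (lineconv R₂ hR₂ y p q r hp hq)
        · exact Or.inr (lineconv R₂ hR₂ y p q r hp hq)
    have hwU : w ∈ U := hw U hUmem
    rcases hwU with hw1 | hw1
    · rcases hR₁ with rfl | rfl
      · exact M₁.not_sim_w hw1
      · exact M₂.not_sim_w hw1
    · rcases hR₂ with rfl | rfl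
      · exact M₁.not_sim_w hw1
      · exact M₂.not_sim_w hw1
  · rintro w ⟨a, ha, b, hb, c, hc, habc⟩
    intro S hS
    exact habc ▸ hS.2 a (hS.1 ha) b (hS.1 hb) c (hS.1 hc)
end

section
/- Let Q be a finitely generated group with word metric d associated to a finite generating set, and let φ ∈ Aut(Q). Then: (a) if L is a Lipschitz constant for φ with respect to d, then d(g, φ(g)) ≤ (1+L)·d(g, Fix φ) for every g ∈ Q; (b) there exists a function ζ: ℕ → ℕ such that d(g, Fix φ) ≤ ζ(d(g, φ(g))) for every g ∈ Q. -/
/-- The word length of `g` with respect to a generating set `S`: the least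
length of a word in `S ∪ S⁻¹` representing `g`. -/
noncomputable def wordLength {G : Type*} [Group G] (S : Set G) (g : G) : ℕ :=
  sInf {n : ℕ | ∃ l : List G, l.length = n ∧ (∀ x ∈ l, x ∈ S ∨ x⁻¹ ∈ S) ∧ l.prod = g}

/-- The left-invariant word metric `d(a,b) = |a⁻¹ b|_S`. -/
noncomputable def wordDist {G : Type*} [Group G] (S : Set G) (a b : G) : ℕ :=
  wordLength S (a⁻¹ * b)

/-- The word distance from `g` to the fixed subgroup `Fix φ`. -/
noncomputable def distToFix {G : Type*} [Group G] (S : Set G) (φ : G ≃* G) (g : G) : ℕ :=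
  sInf {n : ℕ | ∃ h : G, φ h = h ∧ wordDist S g h = n}

section Aux

variable {G : Type*} [Group G] {S : Set G}

lemma exists_word (hgen : Subgroup.closure S = ⊤) (g : G) :
    ∃ l : List G, (∀ x ∈ l, x ∈ S ∨ x⁻¹ ∈ S) ∧ l.prod = g := by
  have hg : g ∈ Subgroup.closure S := hgen ▸ Subgroup.mem_top g
  induction hg using Subgroup.closure_induction with
  | mem x hx => exact ⟨[x], by simpa using Or.inl hx, by simp⟩
  | one => exact ⟨[], by simp, by simp⟩
  | mul x y _ _ hx hy =>
    obtain ⟨l1, h1, p1⟩ := hx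
    obtain ⟨l2, h2, p2⟩ := hy
    refine ⟨l1 ++ l2, ?_, by simp [p1, p2]⟩
    intro z hz
    rcases List.mem_append.1 hz with h | h
    exacts [h1 z h, h2 z h]
  | inv x _ hx =>
    obtain ⟨l, h1, p1⟩ := hx
    refine ⟨(l.map fun x => x⁻¹).reverse, ?_, ?_⟩
    · intro z hz
      simp only [List.mem_reverse, List.mem_map] at hz
      obtain ⟨w, hw, rfl⟩ := hz
      rcases h1 w hw with h | h
      · exact Or.inr (by simpa using h)
      · exact Or.inl h
    · rw [← List.prod_inv_reverse, p1]

lemma wordLength_spec (hgen : Subgroup.closure S = ⊤) (g : G) :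
    ∃ l : List G, l.length = wordLength S g ∧ (∀ x ∈ l, x ∈ S ∨ x⁻¹ ∈ S) ∧ l.prod = g := by
  obtain ⟨l, hl, hp⟩ := exists_word hgen g
  have hne : {n : ℕ | ∃ l : List G, l.length = n ∧ (∀ x ∈ l, x ∈ S ∨ x⁻¹ ∈ S) ∧
      l.prod = g}.Nonempty := ⟨l.length, l, rfl, hl, hp⟩
  exact Nat.sInf_mem hne

lemma wordLength_le {g : G} {l : List G} (hl : ∀ x ∈ l, x ∈ S ∨ x⁻¹ ∈ S)
    (hp : l.prod = g) : wordLength S g ≤ l.length :=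
  Nat.sInf_le ⟨l, rfl, hl, hp⟩

lemma wordLength_mul_le (hgen : Subgroup.closure S = ⊤) (a b : G) :
    wordLength S (a * b) ≤ wordLength S a + wordLength S b := by
  obtain ⟨l1, hl1, h1, p1⟩ := wordLength_spec hgen a
  obtain ⟨l2, hl2, h2, p2⟩ := wordLength_spec hgen b
  have := wordLength_le (S := S) (g := a * b) (l := l1 ++ l2)
    (by
      intro z hz
      rcases List.mem_append.1 hz with h | h
      exacts [h1 z h, h2 z h])
    (by simp [p1, p2])
  simpa [hl1, hl2] using this

lemma word_set_subset_inv (g : G) :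
    {n : ℕ | ∃ l : List G, l.length = n ∧ (∀ x ∈ l, x ∈ S ∨ x⁻¹ ∈ S) ∧ l.prod = g} ⊆
    {n : ℕ | ∃ l : List G, l.length = n ∧ (∀ x ∈ l, x ∈ S ∨ x⁻¹ ∈ S) ∧ l.prod = g⁻¹} := by
  rintro n ⟨l, hl, h1, p1⟩
  refine ⟨(l.map fun x => x⁻¹).reverse, by simp [hl], ?_, by rw [← List.prod_inv_reverse, p1]⟩
  intro z hz
  simp only [List.mem_reverse, List.mem_map] at hz
  obtain ⟨w, hw, rfl⟩ := hz
  rcases h1 w hw with h | h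
  · exact Or.inr (by simpa using h)
  · exact Or.inl h

lemma wordLength_inv (g : G) : wordLength S g⁻¹ = wordLength S g := by
  unfold wordLength
  congr 1
  refine Set.Subset.antisymm ?_ (word_set_subset_inv g)
  have := word_set_subset_inv (S := S) g⁻¹
  simpa using this

lemma wordDist_symm (a b : G) : wordDist S a b = wordDist S b a := by
  rw [wordDist, wordDist, ← wordLength_inv (b⁻¹ * a)]
  simp [mul_inv_rev]

lemma wordDist_triangle (hgen : Subgroup.closure S = ⊤) (a b c : G) :
    wordDist S a c ≤ wordDist S a b + wordDist S b c := by
  have : a⁻¹ * c = (a⁻¹ * b) * (b⁻¹ * c) := by group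
  rw [wordDist, this]
  exact wordLength_mul_le hgen _ _

lemma distToFix_nonempty (φ : G ≃* G) (g : G) :
    {n : ℕ | ∃ h : G, φ h = h ∧ wordDist S g h = n}.Nonempty :=
  ⟨wordDist S g 1, 1, map_one φ, rfl⟩

/-- `distToFix` is invariant under left multiplication by a fixed element. -/
lemma distToFix_fixed_mul (φ : G ≃* G) {k : G} (hk : φ k = k) (g : G) :
    distToFix S φ (k * g) = distToFix S φ g := by
  have key : ∀ (k : G), φ k = k → ∀ g : G,
      {n : ℕ | ∃ h : G, φ h = h ∧ wordDist S g h = n} ⊆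
      {n : ℕ | ∃ h : G, φ h = h ∧ wordDist S (k * g) h = n} := by
    rintro k hk g n ⟨h, hfix, hd⟩
    refine ⟨k * h, by simp [map_mul, hk, hfix], ?_⟩
    have : wordDist S (k * g) (k * h) = wordDist S g h := by
      unfold wordDist
      congr 1
      group
    rw [this, hd]
  refine le_antisymm ?_ ?_
  · exact csInf_le_csInf (OrderBot.bddBelow _) (distToFix_nonempty φ g) (key k hk g)
  · refine csInf_le_csInf (OrderBot.bddBelow _) (distToFix_nonempty φ (k * g)) ?_
    have := key k⁻¹ (by simp [map_inv, hk]) (k * g)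
    simpa using this

end Aux

/-- for a finitely generated group with word metric `d` and an
automorphism `φ`: (a) if `L` is a Lipschitz constant for `φ`, then
`d(g, φ g) ≤ (1 + L) · d(g, Fix φ)` for every `g`; (b) there is a function
`ζ : ℕ → ℕ` with `d(g, Fix φ) ≤ ζ (d(g, φ g))` for every `g`. -/
theorem stmt11 {G : Type*} [Group G] (S : Finset G)
    (hgen : Subgroup.closure (S : Set G) = ⊤) (φ : G ≃* G) :
    (∀ L : ℕ,
      (∀ a b : G, wordDist (S : Set G) (φ a) (φ b) ≤ L * wordDist (S : Set G) a b) →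
      ∀ g : G, wordDist (S : Set G) g (φ g) ≤ (1 + L) * distToFix (S : Set G) φ g) ∧
    (∃ ζ : ℕ → ℕ, ∀ g : G,
      distToFix (S : Set G) φ g ≤ ζ (wordDist (S : Set G) g (φ g))) := by
  constructor
  · -- part (a)
    intro L hL g
    obtain ⟨h, hfix, hd⟩ : ∃ h : G, φ h = h ∧ wordDist (S : Set G) g h = distToFix (S : Set G) φ g :=
      Nat.sInf_mem (distToFix_nonempty φ g)
    calc wordDist (S : Set G) g (φ g)
        ≤ wordDist (S : Set G) g h + wordDist (S : Set G) h (φ g) :=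
          wordDist_triangle hgen _ _ _
      _ = wordDist (S : Set G) g h + wordDist (S : Set G) (φ h) (φ g) := by rw [hfix]
      _ ≤ wordDist (S : Set G) g h + L * wordDist (S : Set G) h g :=
          Nat.add_le_add_left (hL h g) _
      _ = (1 + L) * distToFix (S : Set G) φ g := by
          rw [wordDist_symm h g, hd]; ring
  · -- part (b)
    classical
    set D : G → G := fun g => g⁻¹ * φ g with hD
    have hconst : ∀ g₁ g₂ : G, D g₁ = D g₂ →
        distToFix (S : Set G) φ g₁ = distToFix (S : Set G) φ g₂ := by
      intro g₁ g₂ hq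
      have hfixk : φ (g₁ * g₂⁻¹) = g₁ * g₂⁻¹ := by
        have h1 : φ g₁ = g₁ * D g₁ := by simp [hD]
        have h2 : φ g₂ = g₂ * D g₂ := by simp [hD]
        rw [map_mul, map_inv, h1, h2, hq]
        group
      calc distToFix (S : Set G) φ g₁
          = distToFix (S : Set G) φ ((g₁ * g₂⁻¹) * g₂) := by rw [inv_mul_cancel_right]
        _ = distToFix (S : Set G) φ g₂ := distToFix_fixed_mul φ hfixk g₂
    have hf : ∃ f : G → ℕ, ∀ g : G, distToFix (S : Set G) φ g = f (D g) := by
      refine ⟨fun q => if h : ∃ g, D g = q then distToFix (S : Set G) φ h.choose else 0, ?_⟩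
      intro g
      have hex : ∃ g', D g' = D g := ⟨g, rfl⟩
      simp only [dif_pos hex]
      exact (hconst _ _ hex.choose_spec).symm
    obtain ⟨f, hfspec⟩ := hf
    have hball : ∀ n : ℕ, {q : G | wordLength (S : Set G) q ≤ n}.Finite := by
      intro n
      set A : Set G := (S : Set G) ∪ (fun x => x⁻¹) '' (S : Set G) with hA
      have hAfin : A.Finite := S.finite_toSet.union (S.finite_toSet.image _)
      have hsub : {q : G | wordLength (S : Set G) q ≤ n} ⊆
          (fun l : List A => (l.map Subtype.val).prod) '' {l : List A | l.length ≤ n} := by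
        intro q hq
        obtain ⟨l, hl, hmem, hp⟩ := wordLength_spec hgen q
        have hmem' : ∀ x ∈ l, x ∈ A := by
          intro x hx
          rcases hmem x hx with h | h
          · exact Or.inl h
          · exact Or.inr ⟨x⁻¹, h, by simp⟩
        refine ⟨l.attach.map fun x => ⟨x.1, hmem' x.1 x.2⟩, ?_, ?_⟩
        · simpa [hl] using hq
        · simp only [List.map_map]
          simpa using hp
      refine Set.Finite.subset (Set.Finite.image _ ?_) hsub
      have : Finite A := hAfin
      exact List.finite_length_le A n
    refine ⟨fun n => ((hball n).toFinset.image f).sup id, ?_⟩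
    intro g
    rw [hfspec g]
    refine Finset.le_sup (f := id) ?_
    refine Finset.mem_image_of_mem f ?_
    rw [Set.Finite.mem_toFinset]
    show wordLength (S : Set G) (D g) ≤ wordDist (S : Set G) g (φ g)
    exact le_rfl
end

section
/- Let Q be a finitely generated group with word metric d, let μ: Q³ → Q be any map, and let φ ∈ Aut(Q) satisfy sup_{x,y,z ∈ Q} d(φ(μ(x,y,z)), μ(φ(x),φ(y),φ(z))) ≤ C for some constant C ≥ 0. Then there exists a constant C' such that d(μ(x,y,z), Fix φ) ≤ C' for all x,y,z ∈ Fix φ. In other words, Fix φ is an approximate μ-subalgebra of Q. -/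
/-- Since `S` generates `G`, every element admits a word representation,
so the defining set of `wordLength` is nonempty. -/
lemma wordLength_set_nonempty {G : Type*} [Group G] (S : Set G)
    (hgen : Subgroup.closure S = ⊤) (g : G) :
    {n : ℕ | ∃ l : List G, l.length = n ∧ (∀ x ∈ l, x ∈ S ∨ x⁻¹ ∈ S) ∧ l.prod = g}.Nonempty := by
  have hg : g ∈ Subgroup.closure S := by rw [hgen]; trivial
  have hg' : g ∈ Submonoid.closure (S ∪ S⁻¹) := by
    rw [← Subgroup.closure_toSubmonoid] at *
    exact hg
  obtain ⟨l, hl, hprod⟩ := Submonoid.exists_list_of_mem_closure hg'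
  exact ⟨l.length, l, rfl, fun x hx => by
    rcases hl x hx with h | h
    · exact Or.inl h
    · exact Or.inr (Set.mem_inv.mp h), hprod⟩

/-- If `g` and `g'` have the same displacement under `φ`, then the distance
to the fixed subgroup is controlled: elements differing by a fixed element
have the same distance to `Fix φ`. -/
lemma distToFix_le_of_same_disp {G : Type*} [Group G] (S : Set G) (φ : G ≃* G)
    (g g' : G) (hv : (φ g)⁻¹ * g = (φ g')⁻¹ * g') :
    distToFix S φ g' ≤ distToFix S φ g := by
  have hk : φ (g' * g⁻¹) = g' * g⁻¹ := by
    have h1 : g' = φ g' * ((φ g')⁻¹ * g') := by group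
    have h2 : g = φ g * ((φ g)⁻¹ * g) := by group
    rw [map_mul, map_inv]
    conv_rhs => rw [h1, h2]
    rw [← hv]
    group
  have hne : {n : ℕ | ∃ h : G, φ h = h ∧ wordDist S g h = n}.Nonempty :=
    ⟨wordDist S g 1, 1, map_one φ, rfl⟩
  obtain ⟨h, hfix, hd⟩ := Nat.sInf_mem hne
  apply Nat.sInf_le
  refine ⟨g' * g⁻¹ * h, ?_, ?_⟩
  · rw [map_mul, hk, hfix]
  · have hd' : wordDist S g h = distToFix S φ g := hd
    show wordDist S g' (g' * g⁻¹ * h) = distToFix S φ g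
    rw [← hd']
    unfold wordDist
    congr 1
    group

/-- Balls in the word metric are finite. -/
lemma ball_finite {G : Type*} [Group G] (S : Finset G)
    (hgen : Subgroup.closure (S : Set G) = ⊤) (C : ℕ) :
    {v : G | wordLength (S : Set G) v ≤ C}.Finite := by
  classical
  set U : Set G := (S : Set G) ∪ ((S : Set G))⁻¹ with hU
  have hUfin : U.Finite := S.finite_toSet.union S.finite_toSet.inv
  have := hUfin.to_subtype
  have hLfin : {l : List G | l.length ≤ C ∧ ∀ x ∈ l, x ∈ U}.Finite := by
    apply Set.Finite.subset
      (((List.finite_length_le ↥U C).image (List.map (Subtype.val : ↥U → G))))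
    rintro l ⟨hlen, hmem⟩
    refine ⟨l.pmap (fun x hx => (⟨x, hx⟩ : ↥U)) hmem, ?_, ?_⟩
    · simpa using hlen
    · simp [List.map_pmap]
  apply Set.Finite.subset (hLfin.image List.prod)
  intro v hv
  have hne := wordLength_set_nonempty (S : Set G) hgen v
  obtain ⟨l, hlen, hmem, hprod⟩ := Nat.sInf_mem hne
  refine ⟨l, ⟨?_, ?_⟩, hprod⟩
  · rw [hlen]; exact hv
  · intro x hx
    rcases hmem x hx with h | h
    · exact Or.inl h
    · exact Or.inr (Set.mem_inv.mpr (by simpa using h))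

/-- if `φ` coarsely preserves an arbitrary ternary operation `μ`
(up to a uniform constant `C` in the word metric), then the fixed subgroup of
`φ` is an approximate `μ`-subalgebra: there is `C'` bounding the distance from
`μ(x,y,z)` to `Fix φ` for all `x, y, z ∈ Fix φ`. -/
theorem stmt12 {G : Type*} [Group G] (S : Finset G)
    (hgen : Subgroup.closure (S : Set G) = ⊤)
    (μ : G → G → G → G) (φ : G ≃* G) (C : ℕ)
    (hC : ∀ x y z : G,
      wordDist (S : Set G) (φ (μ x y z)) (μ (φ x) (φ y) (φ z)) ≤ C) :
    ∃ C' : ℕ, ∀ x y z : G, φ x = x → φ y = y → φ z = z →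
      distToFix (S : Set G) φ (μ x y z) ≤ C' := by
  classical
  have hT : {v : G | wordLength (S : Set G) v ≤ C}.Finite := ball_finite S hgen C
  set F : G → ℕ := fun v =>
    if h : ∃ g : G, (φ g)⁻¹ * g = v then distToFix (S : Set G) φ h.choose else 0 with hF
  refine ⟨sSup (F '' {v : G | wordLength (S : Set G) v ≤ C}), ?_⟩
  intro x y z hx hy hz
  set g := μ x y z with hg
  have hvT : (φ g)⁻¹ * g ∈ {v : G | wordLength (S : Set G) v ≤ C} := by
    have := hC x y z
    rw [hx, hy, hz] at this
    exact this
  have hex : ∃ g' : G, (φ g')⁻¹ * g' = (φ g)⁻¹ * g := ⟨g, rfl⟩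
  have h1 : distToFix (S : Set G) φ g ≤ F ((φ g)⁻¹ * g) := by
    rw [hF]
    simp only [dif_pos hex]
    exact distToFix_le_of_same_disp _ φ hex.choose g hex.choose_spec
  exact h1.trans (le_csSup (hT.image F).bddAbove (Set.mem_image_of_mem F hvT))
end

section
/- Let Ω be a countable set and μ a probability measure on Ω with μ({ω}) > 0 for every ω ∈ Ω. Let 𝒞 ⊆ L¹(Ω,μ) be a cone (closed under addition and under multiplication by nonnegative scalars) that is closed in the L¹-norm topology, and suppose there exists c > 0 such that ‖f‖_∞ ≤ c·‖f‖₁ for all f ∈ 𝒞. Then the set {f ∈ 𝒞 : ‖f‖₁ = 1} is compact in the L¹-norm topology. -/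
open MeasureTheory Filter Topology

/-- let `μ` be a fully supported probability measure on a
countable set `Ω`, and let `C ⊆ L¹(Ω,μ)` be an L¹-closed cone on which
`‖·‖_∞ ≤ c·‖·‖₁` for some `c > 0`. Then the set of elements of `C` of
L¹-norm one is compact in the L¹-norm topology. -/
theorem stmt15 {Ω : Type*} [Countable Ω] [MeasurableSpace Ω]
    [MeasurableSingletonClass Ω]
    (μ : Measure Ω) [IsProbabilityMeasure μ] (hfull : ∀ ω : Ω, 0 < μ {ω})
    (C : Set (Lp ℝ 1 μ))
    (hadd : ∀ f ∈ C, ∀ g ∈ C, f + g ∈ C)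
    (hsmul : ∀ f ∈ C, ∀ t : ℝ, 0 ≤ t → t • f ∈ C)
    (hclosed : IsClosed C)
    (c : ℝ) (hc : 0 < c)
    (hbound : ∀ f ∈ C, ∀ ω : Ω, |f ω| ≤ c * ‖f‖) :
    IsCompact {f ∈ C | ‖f‖ = 1} := by
  apply IsSeqCompact.isCompact
  intro f hf
  -- pointwise bound
  have hfb : ∀ n ω, f n ω ∈ Set.Icc (-c) c := by
    intro n ω
    have h1 := hbound (f n) (hf n).1 ω
    rw [(hf n).2, mul_one] at h1
    exact abs_le.mp h1
  -- compactness of the cube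
  have hK : IsCompact (Set.pi Set.univ fun _ : Ω => Set.Icc (-c) c) :=
    isCompact_univ_pi fun _ => isCompact_Icc
  have hKseq : IsSeqCompact (Set.pi Set.univ fun _ : Ω => Set.Icc (-c) c) :=
    hK.isSeqCompact
  obtain ⟨g, hgK, φ, hφ, hconv⟩ :=
    hKseq (x := fun n => fun ω => f n ω) (fun n => by intro ω _; exact hfb n ω)
  -- pointwise convergence
  have hpt : ∀ ω, Tendsto (fun n => f (φ n) ω) atTop (𝓝 (g ω)) := by
    intro ω
    exact (tendsto_pi_nhds.mp hconv) ω
  -- g is integrable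
  have hgmeas : Measurable g := measurable_of_countable g
  have hgb : ∀ ω, ‖g ω‖ ≤ c := by
    intro ω
    have := hgK ω (Set.mem_univ ω)
    exact abs_le.mpr this
  have hgint : Integrable g μ := by
    refine Integrable.mono' (integrable_const c) hgmeas.aestronglyMeasurable ?_
    exact Eventually.of_forall hgb
  have hgmem : MemLp g 1 μ := memLp_one_iff_integrable.mpr hgint
  set G : Lp ℝ 1 μ := hgmem.toLp g with hG
  -- L1 convergence via dominated convergence
  have hL1 : Tendsto (fun n => f (φ n)) atTop (𝓝 G) := by
    rw [Lp.tendsto_Lp_iff_tendsto_eLpNorm]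
    have hdom := tendsto_lintegral_norm_of_dominated_convergence
      (F := fun n => (f (φ n) : Ω → ℝ)) (f := g) (bound := fun _ => c)
      (fun n => (Lp.memLp (f (φ n))).aestronglyMeasurable)
      ((integrable_const c).hasFiniteIntegral)
      (fun n => Eventually.of_forall fun ω => by
        have := hfb (φ n) ω
        exact abs_le.mpr this)
      (Eventually.of_forall hpt)
    convert hdom using 2 with n
    rw [eLpNorm_one_eq_lintegral_enorm]
    congr 1
    ext ω
    rw [← ofReal_norm_eq_enorm]
    rfl
  refine ⟨G, ⟨?_, ?_⟩, φ, hφ, hL1⟩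
  · exact hclosed.mem_of_tendsto hL1 (Eventually.of_forall fun n => (hf (φ n)).1)
  · have : Tendsto (fun n => ‖f (φ n)‖) atTop (𝓝 ‖G‖) :=
      (continuous_norm.tendsto G).comp hL1
    have h1 : Tendsto (fun _ : ℕ => (1 : ℝ)) atTop (𝓝 ‖G‖) := by
      simpa [(hf _).2] using this
    exact tendsto_nhds_unique h1 tendsto_const_nhds
end

section
/- Let M be a median algebra and A ⊆ M an edge-connected subset: any two points of A can be joined by a finite sequence of points of A in which consecutive points are separated by exactly one wall of M. If 𝔥 and 𝔨 are halfspaces of M such that all four sets 𝔥∩A, 𝔥*∩A, 𝔨∩A, 𝔨*∩A are nonempty and 𝔥∩A = 𝔨∩A, then 𝔥 = 𝔨. -/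
/-- `x` and `y` are separated by exactly one wall: there is a unique halfspace
containing `y` but not `x`. -/
def EdgeStep {X : Type*} (med : X → X → X → X) (x y : X) : Prop :=
  ∃! h : Set X, IsHalfspace med h ∧ x ∉ h ∧ y ∈ h

/-- `A` is edge-connected: any two of its points are joined by a finite chain
of points of `A` in which consecutive points are separated by exactly one
wall. -/
def EdgeConnected {X : Type*} (med : X → X → X → X) (A : Set X) : Prop :=
  ∀ x ∈ A, ∀ y ∈ A,
    Relation.ReflTransGen (fun a b => b ∈ A ∧ EdgeStep med a b) x y

/-- if `A` is an edge-connected subset of a median algebra and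
`h`, `k` are halfspaces with `h∩A`, `hᶜ∩A`, `k∩A`, `kᶜ∩A` all nonempty and
`h ∩ A = k ∩ A`, then `h = k`. -/
theorem stmt18 {X : Type*} (M : MedianAlgebra X) (A : Set X)
    (hA : EdgeConnected M.med A)
    (h k : Set X) (hh : IsHalfspace M.med h) (hk : IsHalfspace M.med k)
    (h1 : (h ∩ A).Nonempty) (h2 : (hᶜ ∩ A).Nonempty)
    (h3 : (k ∩ A).Nonempty) (h4 : (kᶜ ∩ A).Nonempty)
    (heq : h ∩ A = k ∩ A) : h = k := by
  -- Find an edge step in A crossing h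
  obtain ⟨x, hxh, hxA⟩ := h1
  obtain ⟨y, hyh, hyA⟩ := h2
  have gen : ∀ a : X, Relation.ReflTransGen (fun a b => b ∈ A ∧ EdgeStep M.med a b) a y →
      a ∈ A → a ∈ h → ∃ a b : X, a ∈ A ∧ a ∈ h ∧ b ∈ A ∧ b ∉ h ∧ EdgeStep M.med a b := by
    intro a hpath
    induction hpath using Relation.ReflTransGen.head_induction_on with
    | refl => exact fun _ hyh' => absurd hyh' hyh
    | head hstep _ ih =>
      rename_i p c _
      intro hpA hph
      obtain ⟨hcA, hes⟩ := hstep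
      by_cases hc : c ∈ h
      · exact ih hcA hc
      · exact ⟨p, c, hpA, hph, hcA, hc, hes⟩
  obtain ⟨a, b, haA, hah, hbA, hbh, hes⟩ := gen x (hA x hxA y hyA) hxA hxh
  -- a ∈ k, b ∉ k
  have hak : a ∈ k := (heq ▸ (Set.mem_inter hah haA : a ∈ h ∩ A)).1
  have hbk : b ∉ k := fun hb => hbh (heq ▸ (Set.mem_inter hb hbA : b ∈ k ∩ A)).1
  -- hᶜ and kᶜ both witness the unique halfspace of the edge step
  obtain ⟨S, _, hSuniq⟩ := hes
  have hhc : IsHalfspace M.med hᶜ := ⟨hh.2.1, by simpa using hh.1, hh.2.2.2, by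
    simpa using hh.2.2.1⟩
  have hkc : IsHalfspace M.med kᶜ := ⟨hk.2.1, by simpa using hk.1, hk.2.2.2, by
    simpa using hk.2.2.1⟩
  have e1 : hᶜ = S := hSuniq hᶜ ⟨hhc, by simpa using hah, hbh⟩
  have e2 : kᶜ = S := hSuniq kᶜ ⟨hkc, by simpa using hak, hbk⟩
  have : hᶜ = kᶜ := e1.trans e2.symm
  simpa using congrArg compl this
end
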